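/- arXiv:2412.07283 — 9 statements merged into one kernel-verified Lean document; each statement's English description precedes it below -/
import Mathlib

section
/- For real numbers $e_1 > 0$ and $e_2 \in [-3 - e_1/2, 0]$, set $e_3 = -6 - e_1 - e_2$. Then for fixed $e_1$, the function $e_2 \mapsto \int_0^{e_1} \frac{df}{\sqrt{-\frac{2}{3}(f-e_1)(f-e_2)(f-e_3)}}$ is strictly increasing on $[-3 - e_1/2, 0]$. -/
open Real Set

private lemma JH_D_pos {e1 e2 f : ℝ} (h1 : -3 - e1/2 ≤ e2) (h2 : e2 ≤ 0)
    (hf0 : 0 < f) (hf1 : f < e1) :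
    0 < -(2/3) * (f - e1) * (f - e2) * (f - (-6 - e1 - e2)) := by
  have h3 : 0 < f - e2 := by linarith
  have h4 : 0 < f - (-6 - e1 - e2) := by linarith
  have h5 : 0 < e1 - f := by linarith
  nlinarith [mul_pos (mul_pos h5 h3) h4]

private lemma JH_D_lb {e1 e2 f : ℝ} (h1 : -3 - e1/2 ≤ e2) (h2 : e2 ≤ 0)
    (hf0 : 0 < f) (hf1 : f < e1) :
    2 * f * (e1 - f) ≤ -(2/3) * (f - e1) * (f - e2) * (f - (-6 - e1 - e2)) := by
  have h5 : 0 < e1 - f := by linarith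
  have hQ : 3 * f ≤ (f - e2) * (f - (-6 - e1 - e2)) := by nlinarith
  nlinarith [mul_le_mul_of_nonneg_left hQ (by positivity : (0:ℝ) ≤ (2/3) * (e1 - f))]

private lemma JH_integrable (e1 : ℝ) (he1 : 0 < e1) {e2 : ℝ}
    (h1 : -3 - e1/2 ≤ e2) (h2 : e2 ≤ 0) :
    IntervalIntegrable
      (fun f => 1 / Real.sqrt (-(2/3) * (f - e1) * (f - e2) * (f - (-6 - e1 - e2))))
      MeasureTheory.volume 0 e1 := by
  have hg1 : IntervalIntegrable (fun x : ℝ => x ^ (-(1/2) : ℝ))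
      MeasureTheory.volume 0 e1 := intervalIntegral.intervalIntegrable_rpow' (by norm_num)
  have hg2 : IntervalIntegrable (fun x : ℝ => (e1 - x) ^ (-(1/2) : ℝ))
      MeasureTheory.volume 0 e1 := by
    have := (intervalIntegral.intervalIntegrable_rpow' (a := 0) (b := e1)
      (r := -(1/2)) (by norm_num)).comp_sub_left e1
    exact (by simpa using this : IntervalIntegrable _ MeasureTheory.volume e1 0).symm
  have hg : IntervalIntegrable
      (fun x : ℝ => (Real.sqrt e1)⁻¹ * (x ^ (-(1/2) : ℝ) + (e1 - x) ^ (-(1/2) : ℝ)))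
      MeasureTheory.volume 0 e1 := ((hg1.add hg2).const_mul _)
  apply hg.mono_fun'
  · apply Measurable.aestronglyMeasurable
    apply Measurable.div measurable_const
    exact Real.continuous_sqrt.measurable.comp (by fun_prop)
  · rw [Filter.EventuallyLE, MeasureTheory.ae_restrict_iff' measurableSet_uIoc]
    filter_upwards with x hx
    rw [Set.uIoc_of_le he1.le] at hx
    obtain ⟨hx0, hx1⟩ := hx
    have hsqe1 : 0 < Real.sqrt e1 := Real.sqrt_pos.2 he1
    have hrx : x ^ (-(1/2) : ℝ) = (Real.sqrt x)⁻¹ := by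
      rw [Real.rpow_neg hx0.le, Real.sqrt_eq_rpow]
    have hrx2 : (e1 - x) ^ (-(1/2) : ℝ) = (Real.sqrt (e1 - x))⁻¹ := by
      rw [Real.rpow_neg (by linarith), Real.sqrt_eq_rpow]
    rcases eq_or_lt_of_le hx1 with heq | hlt
    · -- x = e1 : integrand is 1/√0 = 0
      subst heq
      simp only [sub_self, mul_zero, zero_mul, mul_zero, Real.sqrt_zero, div_zero,
        norm_zero]
      positivity
    · have hD := JH_D_pos h1 h2 hx0 hlt
      have hDlb := JH_D_lb h1 h2 hx0 hlt
      set D := -(2/3) * (x - e1) * (x - e2) * (x - (-6 - e1 - e2)) with hDdef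
      have hsD : 0 < Real.sqrt D := Real.sqrt_pos.2 hD
      have hnorm : ‖1 / Real.sqrt D‖ = (Real.sqrt D)⁻¹ := by
        rw [Real.norm_eq_abs, one_div, abs_of_nonneg (inv_nonneg.2 hsD.le)]
      rw [hnorm, hrx, hrx2]
      have hmain : (Real.sqrt D)⁻¹ ≤ (Real.sqrt e1)⁻¹ * (Real.sqrt x)⁻¹ ∨
          (Real.sqrt D)⁻¹ ≤ (Real.sqrt e1)⁻¹ * (Real.sqrt (e1 - x))⁻¹ := by
        rcases le_or_gt x (e1 / 2) with hc | hc
        · left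
          rw [← mul_inv, ← Real.sqrt_mul he1.le]
          apply inv_anti₀ (Real.sqrt_pos.2 (by positivity))
          apply Real.sqrt_le_sqrt
          nlinarith
        · right
          rw [← mul_inv, ← Real.sqrt_mul he1.le]
          apply inv_anti₀ (Real.sqrt_pos.2 (by nlinarith))
          apply Real.sqrt_le_sqrt
          nlinarith
      have hpos1 : 0 ≤ (Real.sqrt e1)⁻¹ * (Real.sqrt x)⁻¹ := by positivity
      have hpos2 : 0 ≤ (Real.sqrt e1)⁻¹ * (Real.sqrt (e1 - x))⁻¹ := by positivity
      rcases hmain with h | h <;> nlinarith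

/-- For fixed `e1 > 0`, the angle functional `I₊(e1, e2)` is strictly increasing in
`e2` on `[-3 - e1/2, 0]`, where `e3 = -6 - e1 - e2`. -/
theorem Iplus_strictMonoOn_e2 (e1 : ℝ) (he1 : 0 < e1) :
    StrictMonoOn
      (fun e2 : ℝ =>
        ∫ f in (0:ℝ)..e1,
          1 / Real.sqrt (-(2/3) * (f - e1) * (f - e2) * (f - (-6 - e1 - e2))))
      (Set.Icc (-3 - e1/2) 0) := by
  intro a ha b hb hab
  have hIa := JH_integrable e1 he1 ha.1 ha.2
  have hIb := JH_integrable e1 he1 hb.1 hb.2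
  simp only
  rw [← sub_pos, ← intervalIntegral.integral_sub hIb hIa]
  apply intervalIntegral.intervalIntegral_pos_of_pos_on (hIb.sub hIa) _ he1
  intro x hx
  obtain ⟨hx0, hx1⟩ := hx
  have hDa := JH_D_pos ha.1 ha.2 hx0 hx1
  have hDb := JH_D_pos hb.1 hb.2 hx0 hx1
  have hlt : -(2/3) * (x - e1) * (x - b) * (x - (-6 - e1 - b)) <
      -(2/3) * (x - e1) * (x - a) * (x - (-6 - e1 - a)) := by
    have h1 : 0 < e1 - x := by linarith
    have h2 : 0 < b - a := by linarith
    have h3 : 0 < 6 + e1 + a + b := by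
      have := ha.1
      have := hb.1
      nlinarith
    nlinarith [mul_pos (mul_pos h1 h2) h3]
  have hsb : 0 < Real.sqrt (-(2/3) * (x - e1) * (x - b) * (x - (-6 - e1 - b))) :=
    Real.sqrt_pos.2 hDb
  have hss : Real.sqrt (-(2/3) * (x - e1) * (x - b) * (x - (-6 - e1 - b))) <
      Real.sqrt (-(2/3) * (x - e1) * (x - a) * (x - (-6 - e1 - a))) :=
    Real.sqrt_lt_sqrt hDb.le hlt
  have := one_div_lt_one_div_of_lt hsb hss
  linarith
end

section
/- $\lim_{e_1 \to +\infty} \sqrt{e_1}\, I_+(e_1,0) = \int_0^1 \frac{dg}{\sqrt{\frac{2}{3}(1-g)g(g+1)}} = \frac{\sqrt{6\pi}\,\Gamma(5/4)}{\Gamma(3/4)}$. -/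
open Real Set Filter

open MeasureTheory intervalIntegral Topology

/-!
Pulling `√e` inside, the integrand of `√e · I₊(e, 0)` becomes `1 / √((2/3)(1-g)g(g+1+6/e))`, which
increases to the limit integrand as `e → ∞`; since the limit integrand is integrable, dominated
convergence applies. The substitution `u = g²` turns the limit integral into
`√(3/2)/2 · B(1/4, 1/2) = √(3/2)/2 · Γ(1/4)Γ(1/2)/Γ(3/4)`, and `Γ(1/4) = 4Γ(5/4)`, `Γ(1/2) = √π`.
-/

lemma ofReal_rpow_mul_one_sub_rpow {a b x : ℝ} (hx : x ∈ Icc (0 : ℝ) 1) :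
    ((x ^ (a - 1) * (1 - x) ^ (b - 1) : ℝ) : ℂ) =
      (x : ℂ) ^ ((a : ℂ) - 1) * (1 - (x : ℂ)) ^ ((b : ℂ) - 1) := by
  rw [Complex.ofReal_mul, Complex.ofReal_cpow hx.1, Complex.ofReal_cpow (sub_nonneg.2 hx.2)]
  push_cast
  rfl

lemma integrableOn_rpow_mul_one_sub_rpow {a b : ℝ} (ha : 0 < a) (hb : 0 < b) :
    IntegrableOn (fun x : ℝ => x ^ (a - 1) * (1 - x) ^ (b - 1)) (Ioo 0 1) := by
  have h := Complex.betaIntegral_convergent (u := a) (v := b) (by simpa) (by simpa)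
  rw [intervalIntegrable_iff_integrableOn_Ioc_of_le zero_le_one] at h
  refine IntegrableOn.congr_fun (h.mono_set Ioo_subset_Ioc_self).re (fun x hx => ?_)
    measurableSet_Ioo
  simp only [← ofReal_rpow_mul_one_sub_rpow (Ioo_subset_Icc_self hx), RCLike.re_to_complex,
    Complex.ofReal_re]

lemma integral_rpow_mul_one_sub_rpow {a b : ℝ} (ha : 0 < a) (hb : 0 < b) :
    ∫ x in (0 : ℝ)..1, x ^ (a - 1) * (1 - x) ^ (b - 1) = Gamma a * Gamma b / Gamma (a + b) := by
  have h := Complex.betaIntegral_eq_Gamma_mul_div a b (by simpa) (by simpa)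
  rw [Complex.betaIntegral, ← integral_congr (fun x hx => ofReal_rpow_mul_one_sub_rpow
    (by rwa [uIcc_of_le zero_le_one] at hx)), integral_ofReal, ← Complex.ofReal_add,
    Complex.Gamma_ofReal, Complex.Gamma_ofReal, Complex.Gamma_ofReal] at h
  exact_mod_cast h

lemma image_sq_Ioo_zero_one : (fun x : ℝ => x ^ 2) '' Ioo 0 1 = Ioo 0 1 := by
  ext y
  constructor
  · rintro ⟨x, ⟨hx0, hx1⟩, rfl⟩
    exact ⟨by positivity, by nlinarith⟩
  · rintro ⟨hy0, hy1⟩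
    exact ⟨√y, ⟨sqrt_pos.2 hy0, (sqrt_lt' one_pos).2 (by simpa using hy1)⟩, sq_sqrt hy0.le⟩

lemma hasDerivWithinAt_sq_Ioo_zero_one :
    ∀ x ∈ Ioo (0 : ℝ) 1, HasDerivWithinAt (fun x : ℝ => x ^ 2) (2 * x) (Ioo 0 1) x :=
  fun x _ => by simpa using (hasDerivAt_pow 2 x).hasDerivWithinAt

lemma injOn_sq_Ioo_zero_one : InjOn (fun x : ℝ => x ^ 2) (Ioo 0 1) :=
  fun _ hx _ hy => (pow_left_inj₀ hx.1.le hy.1.le two_ne_zero).1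

lemma integrableOn_comp_sq_Ioo_zero_one_iff {f : ℝ → ℝ} :
    IntegrableOn (fun x => 2 * x * f (x ^ 2)) (Ioo 0 1) ↔ IntegrableOn f (Ioo 0 1) := by
  conv_rhs => rw [← image_sq_Ioo_zero_one]
  rw [integrableOn_image_iff_integrableOn_abs_deriv_smul measurableSet_Ioo
    hasDerivWithinAt_sq_Ioo_zero_one injOn_sq_Ioo_zero_one]
  refine integrableOn_congr_fun (fun x hx => ?_) measurableSet_Ioo
  simp [abs_of_pos hx.1]

lemma setIntegral_comp_sq_Ioo_zero_one (f : ℝ → ℝ) :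
    ∫ x in Ioo 0 1, 2 * x * f (x ^ 2) = ∫ u in Ioo 0 1, f u := by
  conv_rhs => rw [← image_sq_Ioo_zero_one]
  rw [integral_image_eq_integral_abs_deriv_smul measurableSet_Ioo
    hasDerivWithinAt_sq_Ioo_zero_one injOn_sq_Ioo_zero_one]
  refine setIntegral_congr_fun measurableSet_Ioo (fun x hx => ?_)
  simp [abs_of_pos hx.1]

lemma one_div_sqrt_cubic_eq {x : ℝ} (hx : x ∈ Ioo (0 : ℝ) 1) :
    1 / √((2 / 3) * (1 - x) * x * (x + 1)) =
      √(3 / 2) / 2 * (2 * x * ((x ^ 2) ^ ((1 / 4 : ℝ) - 1) * (1 - x ^ 2) ^ ((1 / 2 : ℝ) - 1))) := by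
  obtain ⟨hx0, hx1⟩ := hx
  have h1 : 0 < 1 - x ^ 2 := by nlinarith
  have hpow : x * (x ^ 2) ^ ((1 / 4 : ℝ) - 1) = (√x)⁻¹ := by
    rw [← rpow_natCast, ← rpow_mul hx0.le, sqrt_eq_rpow, ← rpow_neg hx0.le, ← rpow_one_add' hx0.le]
    all_goals norm_num
  have hsq : (1 - x ^ 2) ^ ((1 / 2 : ℝ) - 1) = (√(1 - x ^ 2))⁻¹ := by
    rw [sqrt_eq_rpow, ← rpow_neg h1.le]
    norm_num
  calc 1 / √((2 / 3) * (1 - x) * x * (x + 1))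
      = √(3 / 2) * ((√x)⁻¹ * (√(1 - x ^ 2))⁻¹) := by
        rw [show (2 / 3) * (1 - x) * x * (x + 1) = x * (1 - x ^ 2) / (3 / 2) by ring,
          sqrt_div' _ (by norm_num : (0 : ℝ) ≤ 3 / 2), sqrt_mul hx0.le]
        field_simp
    _ = _ := by rw [← hpow, ← hsq]; ring

lemma integrableOn_one_div_sqrt_cubic :
    IntegrableOn (fun x : ℝ => 1 / √((2 / 3) * (1 - x) * x * (x + 1))) (Ioo 0 1) :=
  IntegrableOn.congr_fun ((integrableOn_comp_sq_Ioo_zero_one_iff.2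
    (integrableOn_rpow_mul_one_sub_rpow (by norm_num : (0 : ℝ) < 1 / 4)
      (by norm_num : (0 : ℝ) < 1 / 2))).const_mul _)
    (fun _ hx => (one_div_sqrt_cubic_eq hx).symm) measurableSet_Ioo

lemma integral_one_div_sqrt_cubic :
    ∫ g in (0 : ℝ)..1, 1 / √((2 / 3) * (1 - g) * g * (g + 1)) =
      √(6 * π) * Gamma (5 / 4) / Gamma (3 / 4) := by
  have hbeta := integral_rpow_mul_one_sub_rpow (by norm_num : (0 : ℝ) < 1 / 4)
    (by norm_num : (0 : ℝ) < 1 / 2)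
  rw [integral_of_le zero_le_one, integral_Ioc_eq_integral_Ioo,
    setIntegral_congr_fun measurableSet_Ioo (fun _ hx => one_div_sqrt_cubic_eq hx),
    MeasureTheory.integral_const_mul,
    setIntegral_comp_sq_Ioo_zero_one (fun u => u ^ (1 / 4 - 1 : ℝ) * (1 - u) ^ (1 / 2 - 1 : ℝ)),
    ← integral_Ioc_eq_integral_Ioo, ← integral_of_le zero_le_one, hbeta, Gamma_one_half_eq,
    show (5 / 4 : ℝ) = 1 / 4 + 1 by norm_num, Gamma_add_one (by norm_num),
    show (1 / 4 + 1 / 2 : ℝ) = 3 / 4 by norm_num,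
    show (6 * π) = 3 / 2 * 2 ^ 2 * π by ring, sqrt_mul' _ pi_pos.le,
    sqrt_mul' _ (by positivity), sqrt_sq zero_le_two]
  ring

lemma sqrt_mul_one_div_sqrt_mul {e : ℝ} (he : 0 < e) (y : ℝ) : √e * (1 / √(e * y)) = 1 / √y := by
  rw [sqrt_mul he.le]
  field_simp [(sqrt_pos.2 he).ne']

lemma sqrt_mul_one_div_sqrt_cubic {e : ℝ} (he : 0 < e) (x : ℝ) :
    √e * (1 / √((2 / 3) * (1 - x) * x * (e * x + 6 + e))) =
      1 / √((2 / 3) * (1 - x) * x * (x + 1 + 6 / e)) := by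
  rw [← sqrt_mul_one_div_sqrt_mul he ((2 / 3) * (1 - x) * x * (x + 1 + 6 / e))]
  congr 3
  field_simp
  ring

lemma one_div_sqrt_cubic_add_le {x c : ℝ} (hx : x ∈ Ioo (0 : ℝ) 1) (hc : 0 ≤ c) :
    1 / √((2 / 3) * (1 - x) * x * (x + 1 + c)) ≤ 1 / √((2 / 3) * (1 - x) * x * (x + 1)) := by
  have hA : 0 < (2 / 3) * (1 - x) * x := mul_pos (by linarith [hx.2]) hx.1
  exact one_div_le_one_div_of_le (sqrt_pos.2 (mul_pos hA (by linarith [hx.1])))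
    (sqrt_le_sqrt (by nlinarith))

lemma tendsto_one_div_sqrt_cubic_add {x : ℝ} (hx : x ∈ Ioo (0 : ℝ) 1) :
    Tendsto (fun e : ℝ => 1 / √((2 / 3) * (1 - x) * x * (x + 1 + 6 / e))) atTop
      (𝓝 (1 / √((2 / 3) * (1 - x) * x * (x + 1)))) := by
  have hA : 0 < (2 / 3) * (1 - x) * x * (x + 1) :=
    mul_pos (mul_pos (by linarith [hx.2]) hx.1) (by linarith [hx.1])
  have hcont : ContinuousAt (fun c : ℝ => 1 / √((2 / 3) * (1 - x) * x * (x + 1 + c))) 0 :=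
    continuousAt_const.div (by fun_prop) (by rw [add_zero]; exact (sqrt_pos.2 hA).ne')
  simpa [Function.comp_def] using hcont.tendsto.comp (tendsto_const_nhds.div_atTop tendsto_id)

/-- `lim_{e1 → ∞} √e1 · I₊(e1, 0) = ∫₀¹ dg/√((2/3)(1-g)g(g+1)) = √(6π) Γ(5/4)/Γ(3/4)`. -/
theorem sqrt_mul_Iplus_zero_tendsto :
    Filter.Tendsto
      (fun e1 : ℝ =>
        Real.sqrt e1 *
          ∫ g in (0:ℝ)..1,
            1 / Real.sqrt ((2/3) * (1 - g) * g * (e1 * g + 6 + e1)))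
      Filter.atTop
      (nhds (∫ g in (0:ℝ)..1, 1 / Real.sqrt ((2/3) * (1 - g) * g * (g + 1)))) ∧
    (∫ g in (0:ℝ)..1, 1 / Real.sqrt ((2/3) * (1 - g) * g * (g + 1))) =
      Real.sqrt (6 * π) * Real.Gamma (5/4) / Real.Gamma (3/4) := by
  refine ⟨?_, integral_one_div_sqrt_cubic⟩
  have hrescale : ∀ᶠ e in atTop, √e * ∫ g in (0 : ℝ)..1,
        1 / √((2 / 3) * (1 - g) * g * (e * g + 6 + e)) =
      ∫ x in Ioo (0 : ℝ) 1, 1 / √((2 / 3) * (1 - x) * x * (x + 1 + 6 / e)) := by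
    filter_upwards [eventually_gt_atTop 0] with e he
    simp_rw [integral_of_le zero_le_one, integral_Ioc_eq_integral_Ioo,
      ← MeasureTheory.integral_const_mul, sqrt_mul_one_div_sqrt_cubic he]
  rw [integral_of_le zero_le_one, integral_Ioc_eq_integral_Ioo]
  refine Tendsto.congr' (EventuallyEq.symm hrescale) <|
    tendsto_integral_filter_of_dominated_convergence _ ?_ ?_ integrableOn_one_div_sqrt_cubic ?_
  · exact .of_forall fun e => Measurable.aestronglyMeasurable (by fun_prop)
  · filter_upwards [eventually_gt_atTop 0] with e he
    refine (ae_restrict_iff' measurableSet_Ioo).2 (.of_forall fun x hx => ?_)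
    rw [norm_of_nonneg (by positivity)]
    exact one_div_sqrt_cubic_add_le hx (by positivity)
  · exact (ae_restrict_iff' measurableSet_Ioo).2 (.of_forall fun x hx =>
      tendsto_one_div_sqrt_cubic_add hx)
end

section
/- $\lim_{e_1 \to +\infty} e_1^{-1/2} J_+(e_1,0) = \int_0^1 \frac{g\,dg}{\sqrt{\frac{2}{3}(1-g)g(g+1)}} = \frac{\sqrt{\frac{2}{3}\pi}\,\Gamma(7/4)}{\Gamma(5/4)}$. -/
/-!
After the substitution `f = e₁ g`, `e₁^{-1/2} J₊(e₁,0)` is the integral over `[0,1]` of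
`g / √((2/3)(1-g)g(g + c + 1))` with `c = 6/e₁`. For `c ≥ 0` these integrands are dominated
by the integrable function `√(3/2) (1-g)^{-1/2}`, so dominated convergence gives the limit
as `c → 0⁺`.
At `c = 0` the substitution `u = g²` turns the integral into `(√(3/2)/2) B(3/4, 1/2)`, and
`B(a,b) = Γ(a)Γ(b)/Γ(a+b)`, `Γ(1/2) = √π`, `Γ(7/4) = (3/4) Γ(3/4)` give the closed form.
-/

open Real Set Filter Topology MeasureTheory

theorem integral_rpow_mul_one_sub_rpow_eq_Gamma {a b : ℝ} (ha : 0 < a) (hb : 0 < b) :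
    ∫ x in (0:ℝ)..1, x ^ (a - 1) * (1 - x) ^ (b - 1) = Gamma a * Gamma b / Gamma (a + b) := by
  apply Complex.ofReal_injective
  have hB := Complex.betaIntegral_eq_Gamma_mul_div a b (by simpa) (by simpa)
  rw [Complex.betaIntegral] at hB
  push_cast [← Complex.Gamma_ofReal, ← hB, ← intervalIntegral.integral_ofReal]
  refine intervalIntegral.integral_congr fun x hx => ?_
  rw [uIcc_of_le zero_le_one] at hx
  rw [Complex.ofReal_cpow hx.1, Complex.ofReal_cpow (sub_nonneg.2 hx.2)]
  push_cast; ring_nf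

theorem intervalIntegral.integral_comp_sq_mul {E : Type*} [NormedAddCommGroup E] [NormedSpace ℝ E]
    {a b : ℝ} (ha : 0 ≤ a) (hab : a ≤ b) (g : ℝ → E) :
    ∫ x in a..b, (2 * x) • g (x ^ 2) = ∫ u in a ^ 2..b ^ 2, g u := by
  rw [intervalIntegral.integral_of_le hab,
    intervalIntegral.integral_of_le (pow_le_pow_left₀ ha hab 2),
    ← integral_Icc_eq_integral_Ioc, ← integral_Icc_eq_integral_Ioc]
  refine integral_Icc_deriv_smul_of_deriv_nonneg (by fun_prop) (fun x _ => ?_)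
    (fun x hx => by linarith [hx.1]) hab
  simpa using hasDerivAt_pow 2 x

theorem sqrt_three_halves_mul_sqrt_two_thirds : √(3 / 2) * √(2 / 3) = 1 := by
  rw [← sqrt_mul (by norm_num)]; norm_num

noncomputable def jPlusIntegrand (c g : ℝ) : ℝ :=
  g / √((2 / 3) * (1 - g) * g * (g + c + 1))

theorem jPlusIntegrand_zero :
    jPlusIntegrand 0 = fun g => g / √((2 / 3) * (1 - g) * g * (g + 1)) := by
  funext g; simp [jPlusIntegrand]

theorem inv_sqrt_mul_integral_eq (a : ℝ) {e : ℝ} (he : 0 < e) :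
    (√e)⁻¹ * ∫ f in (0:ℝ)..e, f / √(-(2 / 3) * (f - e) * f * (f + a + e)) =
      ∫ g in (0:ℝ)..1, jPlusIntegrand (a / e) g := by
  have hscale : ∀ g, e * g / √(-(2 / 3) * (e * g - e) * (e * g) * (e * g + a + e)) =
      (√e)⁻¹ * jPlusIntegrand (a / e) g := fun g => by
    have harg : -(2 / 3) * (e * g - e) * (e * g) * (e * g + a + e) =
        (e * √e) ^ 2 * ((2 / 3) * (1 - g) * g * (g + a / e + 1)) := by
      rw [mul_pow, sq_sqrt he.le]; field_simp; ring
    have : 0 < √e := sqrt_pos.2 he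
    rw [harg, sqrt_mul (sq_nonneg _), sqrt_sq (by positivity), jPlusIntegrand, mul_assoc e,
      mul_div_mul_left _ _ he.ne']
    ring
  have h := intervalIntegral.integral_comp_mul_left
    (fun f => f / √(-(2 / 3) * (f - e) * f * (f + a + e))) (a := 0) (b := 1) he.ne'
  simp only [mul_zero, mul_one, hscale, intervalIntegral.integral_const_mul] at h
  have hinv : e⁻¹ = (√e)⁻¹ * (√e)⁻¹ := by rw [← mul_inv, mul_self_sqrt he.le]
  rw [smul_eq_mul, hinv, mul_assoc] at h
  exact (mul_left_cancel₀ (inv_ne_zero (sqrt_pos.2 he).ne') h).symm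

theorem jPlusIntegrand_nonneg (c : ℝ) {x : ℝ} (hx : 0 ≤ x) : 0 ≤ jPlusIntegrand c x :=
  div_nonneg hx (sqrt_nonneg _)

theorem jPlusIntegrand_le {c x : ℝ} (hc : 0 ≤ c) (hx : x ∈ Ioc 0 1) :
    jPlusIntegrand c x ≤ √(3 / 2) * (1 - x) ^ (-(1 / 2) : ℝ) := by
  obtain ⟨hx0, hx1⟩ := hx
  rcases hx1.eq_or_lt with rfl | hx1
  · simp [jPlusIntegrand]
  have hden : √(2 / 3) * √(1 - x) * x ≤ √((2 / 3) * (1 - x) * x * (x + c + 1)) := by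
    rw [le_sqrt' (by positivity), mul_pow, mul_pow, sq_sqrt (by norm_num),
      sq_sqrt (sub_pos.2 hx1).le]
    nlinarith [mul_pos (sub_pos.2 hx1) hx0]
  have : 0 < √(1 - x) := sqrt_pos.2 (sub_pos.2 hx1)
  calc jPlusIntegrand c x ≤ x / (√(2 / 3) * √(1 - x) * x) :=
        div_le_div_of_nonneg_left hx0.le (by positivity) hden
    _ = √(3 / 2) * (1 - x) ^ (-(1 / 2) : ℝ) := by
        rw [rpow_neg (sub_pos.2 hx1).le, ← sqrt_eq_rpow]
        field_simp
        linarith [sqrt_three_halves_mul_sqrt_two_thirds]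

theorem continuousAt_jPlusIntegrand_zero {x : ℝ} (hx : x ∈ Icc 0 1) :
    ContinuousAt (fun c => jPlusIntegrand c x) 0 := by
  rcases eq_or_ne ((1 - x) * x) 0 with hdeg | hdeg
  · have : ∀ c, jPlusIntegrand c x = 0 := fun c => by
      rw [jPlusIntegrand, mul_assoc (2 / 3 : ℝ), hdeg]; simp
    simp only [this]
    exact continuousAt_const
  · have hpos : 0 < (1 - x) * x := lt_of_le_of_ne (mul_nonneg (sub_nonneg.2 hx.2) hx.1) hdeg.symm
    refine continuousAt_const.div (by fun_prop) (sqrt_ne_zero'.2 ?_)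
    nlinarith [hx.1]

theorem continuousWithinAt_integral_jPlusIntegrand :
    ContinuousWithinAt (fun c => ∫ g in (0:ℝ)..1, jPlusIntegrand c g) (Ici 0) 0 := by
  have hbound :
      IntervalIntegrable (fun x => √(3 / 2) * (1 - x) ^ (-(1 / 2) : ℝ)) volume 0 1 := by
    have h := (intervalIntegral.intervalIntegrable_rpow' (a := 0) (b := 1) (r := -(1 / 2))
      (by norm_num)).comp_sub_left 1
    simpa using (h.const_mul (√(3 / 2))).symm
  refine intervalIntegral.tendsto_integral_filter_of_dominated_convergence _
    (Eventually.of_forall fun c => ?_) ?_ hbound ?_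
  · exact (by unfold jPlusIntegrand; fun_prop : Measurable (jPlusIntegrand c)).aestronglyMeasurable
  · filter_upwards [self_mem_nhdsWithin] with c hc
    refine Eventually.of_forall fun x hx => ?_
    rw [uIoc_of_le zero_le_one] at hx
    rw [norm_of_nonneg (jPlusIntegrand_nonneg c hx.1.le)]
    exact jPlusIntegrand_le hc hx
  · refine Eventually.of_forall fun x hx => ?_
    rw [uIoc_of_le zero_le_one] at hx
    exact (continuousAt_jPlusIntegrand_zero (Ioc_subset_Icc_self hx)).continuousWithinAt

theorem jPlusIntegrand_zero_eq {x : ℝ} (hx : x ∈ Icc 0 1) :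
    jPlusIntegrand 0 x =
      √(3 / 2) / 2 *
        (2 * x * ((x ^ 2) ^ (3 / 4 - 1 : ℝ) * (1 - x ^ 2) ^ (1 / 2 - 1 : ℝ))) := by
  obtain ⟨hx0, hx1⟩ := hx
  rcases hx0.eq_or_lt with rfl | hx0
  · simp [jPlusIntegrand]
  rcases hx1.eq_or_lt with rfl | hx1
  · norm_num [jPlusIntegrand]
  have h1x2 : 0 < 1 - x ^ 2 := by nlinarith
  have hpow : (x ^ 2) ^ (3 / 4 - 1 : ℝ) = (√x)⁻¹ := by
    rw [← rpow_natCast, ← rpow_mul hx0.le, sqrt_eq_rpow, ← rpow_neg hx0.le]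
    norm_num
  have hroot : (1 - x ^ 2) ^ (1 / 2 - 1 : ℝ) = (√(1 - x ^ 2))⁻¹ := by
    rw [sqrt_eq_rpow, ← rpow_neg h1x2.le]
    norm_num
  have hden : √((2 / 3) * (1 - x) * x * (x + 0 + 1)) = √(2 / 3) * √x * √(1 - x ^ 2) := by
    rw [← sqrt_mul (by norm_num), ← sqrt_mul (by positivity)]
    congr 1; ring
  have : 0 < √x := sqrt_pos.2 hx0
  have : 0 < √(1 - x ^ 2) := sqrt_pos.2 h1x2
  rw [jPlusIntegrand, hpow, hroot, hden]
  field_simp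
  linarith [sqrt_three_halves_mul_sqrt_two_thirds]

theorem integral_jPlusIntegrand_zero :
    ∫ g in (0:ℝ)..1, jPlusIntegrand 0 g =
      √((2 / 3) * π) * Gamma (7 / 4) / Gamma (5 / 4) := by
  have hbeta : ∫ g in (0:ℝ)..1, jPlusIntegrand 0 g = √(3 / 2) / 2 *
      ∫ u in (0:ℝ)..1, u ^ (3 / 4 - 1 : ℝ) * (1 - u) ^ (1 / 2 - 1 : ℝ) := by
    have h := intervalIntegral.integral_comp_sq_mul le_rfl zero_le_one
      (fun u : ℝ => u ^ (3 / 4 - 1 : ℝ) * (1 - u) ^ (1 / 2 - 1 : ℝ))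
    rw [one_pow, zero_pow two_ne_zero] at h
    rw [← h, ← intervalIntegral.integral_const_mul]
    refine intervalIntegral.integral_congr fun x hx => ?_
    rw [uIcc_of_le zero_le_one] at hx
    exact jPlusIntegrand_zero_eq hx
  have hGamma : Gamma (7 / 4) = 3 / 4 * Gamma (3 / 4) := by
    rw [show (7 / 4 : ℝ) = 3 / 4 + 1 by norm_num, Gamma_add_one (by norm_num)]
  have hsqrt : √(3 / 2) = 3 / 2 * √(2 / 3) := by
    rw [show (3 / 2 : ℝ) = (3 / 2) ^ 2 * (2 / 3) by norm_num, sqrt_mul (by positivity),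
      sqrt_sq (by norm_num)]
    norm_num
  rw [hbeta, integral_rpow_mul_one_sub_rpow_eq_Gamma (by norm_num) (by norm_num),
    Gamma_one_half_eq, hGamma, sqrt_mul (by norm_num), hsqrt]
  norm_num
  ring

/-- `lim_{e1 → ∞} e1^{-1/2} · J₊(e1, 0) = ∫₀¹ g dg/√((2/3)(1-g)g(g+1))
    = √((2/3)π) Γ(7/4)/Γ(5/4)`. -/
theorem inv_sqrt_mul_Jplus_zero_tendsto :
    Filter.Tendsto
      (fun e1 : ℝ =>
        (Real.sqrt e1)⁻¹ *
          ∫ f in (0:ℝ)..e1,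
            f / Real.sqrt (-(2/3) * (f - e1) * f * (f + 6 + e1)))
      Filter.atTop
      (nhds (∫ g in (0:ℝ)..1, g / Real.sqrt ((2/3) * (1 - g) * g * (g + 1)))) ∧
    (∫ g in (0:ℝ)..1, g / Real.sqrt ((2/3) * (1 - g) * g * (g + 1))) =
      Real.sqrt ((2/3) * π) * Real.Gamma (7/4) / Real.Gamma (5/4) := by
  rw [← jPlusIntegrand_zero]
  have hc : Tendsto (fun e : ℝ => 6 / e) atTop (𝓝[Ici 0] 0) :=
    tendsto_nhdsWithin_of_tendsto_nhds_of_eventually_within _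
      (tendsto_const_nhds.div_atTop tendsto_id)
      ((eventually_gt_atTop 0).mono fun e he => (div_pos (by norm_num) he).le)
  refine ⟨(continuousWithinAt_integral_jPlusIntegrand.tendsto.comp hc).congr' ?_,
    integral_jPlusIntegrand_zero⟩
  filter_upwards [eventually_gt_atTop 0] with e he
  exact (inv_sqrt_mul_integral_eq 6 he).symm
end

section
/- The function $e_1 \mapsto J_+(e_1,0) = \int_0^1 \frac{\sqrt{e_1}\,g\,dg}{\sqrt{\frac{2}{3}(1-g)g(g+6/e_1+1)}}$ is strictly increasing on $(0,\infty)$. -/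
/-!
For fixed `g ∈ (0, 1)` the integrand `√e · g / √((2/3)(1 - g) g (g + 6/e + 1))` is strictly
increasing in `e`: the numerator grows and the radicand shrinks. The integrand is dominated by
`e / (2 √(1 - g))`, so it is integrable and the pointwise strict inequality passes to the integrals.
-/

open Real Set MeasureTheory intervalIntegral

theorem intervalIntegral_lt_intervalIntegral_of_lt_on {f g : ℝ → ℝ} {a b : ℝ} (hab : a < b)
    (hf : IntervalIntegrable f volume a b) (hg : IntervalIntegrable g volume a b)
    (hlt : ∀ x ∈ Ioo a b, f x < g x) : ∫ x in a..b, f x < ∫ x in a..b, g x := by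
  have h := intervalIntegral_pos_of_pos_on (hg.sub hf) (fun x hx => sub_pos.2 (hlt x hx)) hab
  rwa [integral_sub hg hf, sub_pos] at h

theorem strictMonoOn_intervalIntegral {F : ℝ → ℝ → ℝ} {s : Set ℝ} {a b : ℝ} (hab : a < b)
    (hF : ∀ e ∈ s, IntervalIntegrable (F e) volume a b)
    (hmono : ∀ x ∈ Ioo a b, StrictMonoOn (fun e => F e x) s) :
    StrictMonoOn (fun e => ∫ x in a..b, F e x) s :=
  fun _ he _ he' hlt => intervalIntegral_lt_intervalIntegral_of_lt_on hab (hF _ he) (hF _ he')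
    fun x hx => hmono x hx he he' hlt

theorem integrableOn_Ioo_inv_sqrt_one_sub :
    IntegrableOn (fun x : ℝ => (√(1 - x))⁻¹) (Ioo 0 1) := by
  have h := ((intervalIntegrable_rpow' (r := -(1 / 2)) (a := 0) (b := 1)
    (by norm_num)).comp_sub_left 1).symm
  rw [sub_zero, sub_self, intervalIntegrable_iff_integrableOn_Ioo_of_le zero_le_one] at h
  refine h.congr_fun (fun x hx => ?_) measurableSet_Ioo
  rw [sqrt_eq_rpow]
  exact rpow_neg (by linarith [hx.2]) _

noncomputable def jplusIntegrand (e g : ℝ) : ℝ :=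
  √e * g / √((2 / 3) * (1 - g) * g * (g + 6 / e + 1))

theorem jplusIntegrand_nonneg (e : ℝ) {g : ℝ} (hg : 0 ≤ g) : 0 ≤ jplusIntegrand e g := by
  unfold jplusIntegrand
  positivity

theorem jplusIntegrand_le {e g : ℝ} (he : 0 < e) (hg : g ∈ Ioo 0 1) :
    jplusIntegrand e g ≤ e / 2 * (√(1 - g))⁻¹ := by
  obtain ⟨hg0, hg1⟩ := hg
  have h1g : 0 < 1 - g := by linarith
  have hD : 0 < (2 / 3) * (1 - g) * g * (g + 6 / e + 1) := by positivity
  refine le_of_pow_le_pow_left₀ two_ne_zero (by positivity) ?_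
  rw [jplusIntegrand, div_pow, mul_pow, mul_pow, sq_sqrt he.le, sq_sqrt hD.le, inv_pow,
    sq_sqrt h1g.le, ← div_eq_mul_inv, div_le_div_iff₀ hD h1g]
  have hexpand : (e / 2) ^ 2 * ((2 / 3) * (1 - g) * g * (g + 6 / e + 1))
      = e ^ 2 / 6 * ((1 - g) * g * (g + 1)) + e * ((1 - g) * g) := by
    field_simp
    ring
  rw [hexpand]
  -- `e g (1 - g) - e g² (1 - g) = e g (1 - g)²`
  linarith [mul_nonneg (mul_nonneg he.le hg0.le) (sq_nonneg (1 - g)),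
    show 0 ≤ e ^ 2 / 6 * ((1 - g) * g * (g + 1)) by positivity]

theorem intervalIntegrable_jplusIntegrand {e : ℝ} (he : 0 < e) :
    IntervalIntegrable (jplusIntegrand e) volume 0 1 := by
  rw [intervalIntegrable_iff_integrableOn_Ioo_of_le zero_le_one]
  have hmeas : Measurable (jplusIntegrand e) := by
    unfold jplusIntegrand
    fun_prop
  refine (integrableOn_Ioo_inv_sqrt_one_sub.const_mul (e / 2)).mono' hmeas.aestronglyMeasurable
    ((ae_restrict_iff' measurableSet_Ioo).2 ?_)
  filter_upwards with g hg
  rw [norm_of_nonneg (jplusIntegrand_nonneg e hg.1.le)]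
  exact jplusIntegrand_le he hg

theorem jplusIntegrand_strictMonoOn {g : ℝ} (hg : g ∈ Ioo 0 1) :
    StrictMonoOn (fun e => jplusIntegrand e g) (Ioi 0) := by
  intro a (ha : 0 < a) b (hb : 0 < b) hab
  obtain ⟨hg0, hg1⟩ := hg
  have h1g : 0 < 1 - g := by linarith
  have hradicand : (2 / 3) * (1 - g) * g * (g + 6 / b + 1)
      ≤ (2 / 3) * (1 - g) * g * (g + 6 / a + 1) := by
    gcongr
  exact div_lt_div₀ (mul_lt_mul_of_pos_right (sqrt_lt_sqrt ha.le hab) hg0)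
    (sqrt_le_sqrt hradicand) (by positivity) (sqrt_pos.2 (by positivity))

/-- The flux functional `e1 ↦ J₊(e1, 0)` is strictly increasing on `(0, ∞)`. -/
theorem Jplus_zero_strictMonoOn :
    StrictMonoOn
      (fun e1 : ℝ =>
        ∫ g in (0:ℝ)..1,
          Real.sqrt e1 * g / Real.sqrt ((2/3) * (1 - g) * g * (g + 6/e1 + 1)))
      (Set.Ioi 0) :=
  strictMonoOn_intervalIntegral zero_lt_one (fun _ he => intervalIntegrable_jplusIntegrand he)
    fun _ hg => jplusIntegrand_strictMonoOn hg
end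

section
/- $\lim_{e_1 \to 0^+} \frac{J_+(e_1,0)}{e_1} = \frac{\pi}{4}$, where $J_+(e_1,0) = \int_0^{e_1} \frac{f\,df}{\sqrt{-\frac{2}{3}(f-e_1)f(f+6+e_1)}}$. -/
open Real Set Filter MeasureTheory intervalIntegral Topology

/-!
Substituting `f = e g` turns `J₊(e, 0) / e` into `∫₀¹ g / √(⅔ g (1 - g) (e g + 6 + e)) dg`.
For `e ≥ 0` this integrand decreases in `e`, so it is dominated by its value at `e = 0`,
namely `g / √(4 g (1 - g))`, and dominated convergence gives the limit
`∫₀¹ g / √(4 g (1 - g)) dg = π / 4`, computed from the antiderivative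
`arcsin (2 g - 1) / 4 - √(g (1 - g)) / 2`.
-/

lemma sqrt_four_mul_mul_one_sub (g : ℝ) :
    √(4 * g * (1 - g)) = 2 * √(g * (1 - g)) := by
  rw [mul_assoc, sqrt_mul (by norm_num), show (4 : ℝ) = 2 ^ 2 by norm_num, sqrt_sq (by norm_num)]

lemma hasDerivAt_arcsin_sub_sqrt {g : ℝ} (hg₀ : 0 < g) (hg₁ : g < 1) :
    HasDerivAt (fun x => arcsin (2 * x - 1) / 4 - √(x * (1 - x)) / 2)
      (g / √(4 * g * (1 - g))) g := by
  have hpos : 0 < g * (1 - g) := mul_pos hg₀ (by linarith)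
  have hlin : HasDerivAt (fun x : ℝ => 2 * x - 1) 2 g := by
    simpa using ((hasDerivAt_id' g).const_mul 2).sub_const 1
  have hprod : HasDerivAt (fun x : ℝ => x * (1 - x)) (1 - 2 * g) g :=
    ((hasDerivAt_id' g).mul ((hasDerivAt_id' g).const_sub 1)).congr_deriv (by ring)
  have harcsin := (hasDerivAt_arcsin (x := 2 * g - 1) (by linarith) (by linarith)).comp g hlin
  refine ((harcsin.div_const 4).sub ((hprod.sqrt hpos.ne').div_const 2)).congr_deriv ?_
  rw [sqrt_four_mul_mul_one_sub, show 1 - (2 * g - 1) ^ 2 = 2 ^ 2 * (g * (1 - g)) by ring,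
    sqrt_mul (by norm_num), sqrt_sq (by norm_num)]
  field_simp
  ring

lemma intervalIntegrable_div_sqrt_four_mul_mul_one_sub :
    IntervalIntegrable (fun g => g / √(4 * g * (1 - g))) volume 0 1 := by
  refine intervalIntegrable_deriv_of_nonneg
    (g := fun x => arcsin (2 * x - 1) / 4 - √(x * (1 - x)) / 2) (by fun_prop)
    (fun g hg => ?_) (fun g hg => ?_)
  all_goals rw [min_eq_left zero_le_one, max_eq_right zero_le_one] at hg
  · exact hasDerivAt_arcsin_sub_sqrt hg.1 hg.2
  · exact div_nonneg hg.1.le (sqrt_nonneg _)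

lemma integral_div_sqrt_four_mul_mul_one_sub :
    ∫ g in (0 : ℝ)..1, g / √(4 * g * (1 - g)) = π / 4 := by
  rw [integral_eq_sub_of_hasDerivAt_of_le zero_le_one (by fun_prop)
    (fun g hg => hasDerivAt_arcsin_sub_sqrt hg.1 hg.2)
    intervalIntegrable_div_sqrt_four_mul_mul_one_sub]
  norm_num
  ring

noncomputable def rescaledIntegrand (e g : ℝ) : ℝ :=
  g / √(2 / 3 * g * (1 - g) * (e * g + 6 + e))

lemma rescaledIntegrand_zero : rescaledIntegrand 0 = fun g => g / √(4 * g * (1 - g)) := by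
  ext g; rw [rescaledIntegrand]; ring_nf

-- The singular endpoint `g = 1` takes the junk value `1 / √0 = 0`.
lemma rescaledIntegrand_one (e : ℝ) : rescaledIntegrand e 1 = 0 := by
  simp [rescaledIntegrand]

lemma norm_rescaledIntegrand_le {e g : ℝ} (he : 0 ≤ e) (hg : g ∈ Ioc 0 1) :
    ‖rescaledIntegrand e g‖ ≤ rescaledIntegrand 0 g := by
  obtain ⟨hg₀, hg₁⟩ := hg
  rcases hg₁.eq_or_lt with rfl | hg₁
  · simp [rescaledIntegrand_one]
  have hq : 0 < g * (1 - g) := mul_pos hg₀ (by linarith)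
  rw [rescaledIntegrand, rescaledIntegrand, norm_of_nonneg (div_nonneg hg₀.le (sqrt_nonneg _))]
  refine div_le_div_of_nonneg_left hg₀.le (sqrt_pos.2 (by positivity)) (sqrt_le_sqrt ?_)
  nlinarith [mul_nonneg hq.le (mul_nonneg he (by linarith : 0 ≤ g + 1))]

lemma continuousAt_rescaledIntegrand {g : ℝ} (hg : g ∈ Ioc 0 1) :
    ContinuousAt (rescaledIntegrand · g) 0 := by
  obtain ⟨hg₀, hg₁⟩ := hg
  rcases hg₁.eq_or_lt with rfl | hg₁
  · simp only [rescaledIntegrand_one]; exact continuousAt_const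
  have hq : 0 < g * (1 - g) := mul_pos hg₀ (by linarith)
  exact continuousAt_const.div (by fun_prop) (sqrt_pos.2 (by nlinarith)).ne'

lemma tendsto_integral_rescaledIntegrand :
    Tendsto (fun e => ∫ g in (0 : ℝ)..1, rescaledIntegrand e g) (𝓝[>] 0) (𝓝 (π / 4)) := by
  rw [← integral_div_sqrt_four_mul_mul_one_sub, ← rescaledIntegrand_zero]
  refine tendsto_integral_filter_of_dominated_convergence (rescaledIntegrand 0) ?_ ?_ ?_ ?_
  · refine Eventually.of_forall fun e => Measurable.aestronglyMeasurable ?_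
    unfold rescaledIntegrand
    fun_prop
  · filter_upwards [self_mem_nhdsWithin] with e he
    exact ae_of_all _ fun g hg =>
      norm_rescaledIntegrand_le he.le (by rwa [uIoc_of_le zero_le_one] at hg)
  · exact rescaledIntegrand_zero ▸ intervalIntegrable_div_sqrt_four_mul_mul_one_sub
  · exact ae_of_all _ fun g hg =>
      (continuousAt_rescaledIntegrand (by rwa [uIoc_of_le zero_le_one] at hg)).tendsto.mono_left
        nhdsWithin_le_nhds

lemma integral_div_eq_integral_rescaledIntegrand {e : ℝ} (he : 0 < e) :
    (∫ f in (0 : ℝ)..e, f / √(-(2 / 3) * (f - e) * f * (f + 6 + e))) / e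
      = ∫ g in (0 : ℝ)..1, rescaledIntegrand e g := by
  have hsubst := integral_comp_mul_left (a := 0) (b := 1)
    (fun f => f / √(-(2 / 3) * (f - e) * f * (f + 6 + e))) he.ne'
  rw [mul_zero, mul_one, smul_eq_mul] at hsubst
  rw [div_eq_inv_mul, ← hsubst]
  refine integral_congr fun g _ => ?_
  simp only [rescaledIntegrand]
  rw [show -(2 / 3) * (e * g - e) * (e * g) * (e * g + 6 + e)
      = e ^ 2 * (2 / 3 * g * (1 - g) * (e * g + 6 + e)) by ring,
    sqrt_mul (sq_nonneg e), sqrt_sq he.le, mul_div_mul_left _ _ he.ne']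

/-- `lim_{e1 → 0⁺} J₊(e1, 0)/e1 = π/4`. -/
theorem Jplus_zero_div_tendsto :
    Filter.Tendsto
      (fun e1 : ℝ =>
        (∫ f in (0:ℝ)..e1,
          f / Real.sqrt (-(2/3) * (f - e1) * f * (f + 6 + e1))) / e1)
      (nhdsWithin 0 (Set.Ioi 0)) (nhds (π / 4)) :=
  tendsto_integral_rescaledIntegrand.congr' <| eventually_nhdsWithin_of_forall
    fun _ he => (integral_div_eq_integral_rescaledIntegrand he).symm
end

section
/- The derivative of $e_1 \mapsto I_+(e_1,0)$ at $e_1 = 0^+$ equals $-\pi/16$; i.e., $\lim_{e_1 \to 0^+} \frac{I_+(e_1,0) - \pi/2}{e_1} = -\frac{1}{24}\int_0^1 \frac{1+g}{\sqrt{(1-g)g}}\,dg = -\frac{\pi}{16}$. -/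
/-!
Since `(2/3)(1-g)g(e g + 6 + e) = 4(1-g)g (1 + e(1+g)/6)`, the integrand is `w g / √(1 + e c g)`
with `w g = 1/(2√((1-g)g))` and `c g = (1+g)/6 ≥ 0`. Writing `1/√(1+s) = 1 + s σ(s)` with
`σ(s) = -1/(√(1+s)(1+√(1+s)))`, the difference quotient in `e` is `w c σ(e c)`, which is
dominated by `|w c|/2` for `e ≥ 0` and tends to `-w c/2`; dominated convergence gives the limit
`-(1/2)∫ w c`. The two remaining integrals come from the antiderivatives `arcsin (2g-1)` of
`1/√((1-g)g)` and `(3/2) arcsin (2g-1) - √((1-g)g)` of `(1+g)/√((1-g)g)`; as nonnegative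
derivatives these integrands are automatically integrable.
-/

open Real Set Filter MeasureTheory intervalIntegral Topology Interval

/-- The difference quotient `(1/√(1+s) - 1)/s`, in a form that is visibly continuous at `s = 0`. -/
noncomputable def invSqrtSlope (s : ℝ) : ℝ := -1 / (√(1 + s) * (1 + √(1 + s)))

theorem one_div_sqrt_one_add_eq_one_add_mul_invSqrtSlope {s : ℝ} (hs : -1 < s) :
    1 / √(1 + s) = 1 + s * invSqrtSlope s := by
  have hr : 0 < √(1 + s) := sqrt_pos.2 (by linarith)
  have hr2 : √(1 + s) ^ 2 = 1 + s := sq_sqrt (by linarith)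
  unfold invSqrtSlope
  field_simp
  linear_combination -hr2

theorem invSqrtSlope_zero : invSqrtSlope 0 = -1 / 2 := by
  norm_num [invSqrtSlope]

theorem continuousAt_invSqrtSlope_zero : ContinuousAt invSqrtSlope 0 :=
  continuousAt_const.div (by fun_prop) (by norm_num)

theorem measurable_invSqrtSlope : Measurable invSqrtSlope := by
  unfold invSqrtSlope; fun_prop

theorem abs_invSqrtSlope_le {s : ℝ} (hs : 0 ≤ s) : |invSqrtSlope s| ≤ 1 / 2 := by
  have hr : 1 ≤ √(1 + s) := one_le_sqrt.2 (by linarith)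
  rw [invSqrtSlope, abs_div, abs_neg, abs_one, abs_of_pos (by positivity)]
  gcongr
  nlinarith

theorem tendsto_slope_integral_div_sqrt_one_add {w c : ℝ → ℝ} {a b : ℝ}
    (hw : IntervalIntegrable w volume a b)
    (hwc : IntervalIntegrable (fun g ↦ w g * c g) volume a b)
    (hc : Measurable c) (hc_nonneg : ∀ g ∈ Ι a b, 0 ≤ c g) :
    Tendsto (fun e ↦ ((∫ g in a..b, w g / √(1 + e * c g)) - ∫ g in a..b, w g) / e)
      (𝓝[>] 0) (𝓝 (-(1 / 2) * ∫ g in a..b, w g * c g)) := by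
  set F : ℝ → ℝ → ℝ := fun e g ↦ w g * c g * invSqrtSlope (e * c g)
  have hF_meas (e : ℝ) : AEStronglyMeasurable (F e) (volume.restrict (Ι a b)) :=
    hwc.def'.aestronglyMeasurable.mul
      ((measurable_invSqrtSlope.comp (hc.const_mul e)).aestronglyMeasurable)
  have hF_bound {e : ℝ} (he : 0 ≤ e) {g : ℝ} (hg : g ∈ Ι a b) :
      ‖F e g‖ ≤ 1 / 2 * ‖w g * c g‖ := by
    rw [norm_mul, mul_comm, Real.norm_eq_abs (invSqrtSlope _)]
    gcongr
    exact abs_invSqrtSlope_le (mul_nonneg he (hc_nonneg g hg))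
  have hF_lim (g : ℝ) :
      Tendsto (fun e ↦ F e g) (𝓝[>] 0) (𝓝 (-(1 / 2) * (w g * c g))) := by
    have hslope : Tendsto (fun e ↦ invSqrtSlope (e * c g)) (𝓝 0) (𝓝 (-1 / 2)) := by
      rw [← invSqrtSlope_zero]
      exact continuousAt_invSqrtSlope_zero.tendsto.comp
        ((continuous_mul_const (c g)).tendsto' 0 0 (zero_mul _))
    convert (tendsto_const_nhds.mul hslope).mono_left nhdsWithin_le_nhds using 2
    ring
  have hDCT := intervalIntegral.tendsto_integral_filter_of_dominated_convergence _
    (.of_forall hF_meas)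
    (eventually_nhdsWithin_of_forall (s := Ioi 0) fun e (he : 0 < e) ↦
      .of_forall fun g hg ↦ hF_bound he.le hg)
    (hwc.norm.const_mul _) (.of_forall fun g _ ↦ hF_lim g)
  rw [intervalIntegral.integral_const_mul] at hDCT
  refine hDCT.congr' ?_
  filter_upwards [self_mem_nhdsWithin] with e (he : 0 < e)
  have hF_int : IntervalIntegrable (F e) volume a b :=
    (hwc.norm.const_mul (1 / 2)).mono_fun' (hF_meas e)
      ((ae_restrict_iff' measurableSet_uIoc).2 (.of_forall fun g hg ↦ hF_bound he.le hg))
  have hsplit : ∀ᵐ g ∂volume, g ∈ Ι a b → w g / √(1 + e * c g) = w g + e * F e g := by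
    refine .of_forall fun g hg ↦ ?_
    rw [div_eq_mul_one_div,
      one_div_sqrt_one_add_eq_one_add_mul_invSqrtSlope (by nlinarith [hc_nonneg g hg])]
    ring
  rw [integral_congr_ae hsplit, integral_add hw (hF_int.const_mul e),
    intervalIntegral.integral_const_mul, add_sub_cancel_left, mul_div_cancel_left₀ _ he.ne']

theorem integral_eq_sub_of_hasDerivAt_of_nonneg {F f : ℝ → ℝ} {a b : ℝ} (hab : a ≤ b)
    (hcont : ContinuousOn F (Icc a b)) (hderiv : ∀ x ∈ Ioo a b, HasDerivAt F (f x) x)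
    (hf : ∀ x ∈ Ioo a b, 0 ≤ f x) :
    IntervalIntegrable f volume a b ∧ ∫ x in a..b, f x = F b - F a := by
  have hint : IntervalIntegrable f volume a b :=
    intervalIntegrable_deriv_of_nonneg (by rwa [uIcc_of_le hab])
      (by simpa [hab] using hderiv) (by simpa [hab] using hf)
  exact ⟨hint, integral_eq_sub_of_hasDerivAt_of_le hab hcont hderiv hint⟩

theorem hasDerivAt_arcsin_two_mul_sub_one {x : ℝ} (hx : x ∈ Ioo (0 : ℝ) 1) :
    HasDerivAt (fun g ↦ arcsin (2 * g - 1)) (1 / √((1 - x) * x)) x := by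
  obtain ⟨h0, h1⟩ := hx
  have hq : 0 < √((1 - x) * x) := sqrt_pos.2 (by nlinarith)
  have hsq : √(1 - (2 * x - 1) ^ 2) = 2 * √((1 - x) * x) := by
    rw [show 1 - (2 * x - 1) ^ 2 = 2 ^ 2 * ((1 - x) * x) by ring, sqrt_mul (by norm_num),
      sqrt_sq zero_le_two]
  have hlin : HasDerivAt (fun g : ℝ ↦ 2 * g - 1) 2 x := by
    simpa using ((hasDerivAt_id x).const_mul 2).sub_const 1
  refine ((hasDerivAt_arcsin (by linarith) (by linarith)).comp x hlin).congr_deriv ?_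
  rw [hsq]
  field_simp

theorem integral_one_div_sqrt_one_sub_mul_self :
    IntervalIntegrable (fun g ↦ 1 / √((1 - g) * g)) volume 0 1 ∧
      ∫ g in (0 : ℝ)..1, 1 / √((1 - g) * g) = π := by
  convert integral_eq_sub_of_hasDerivAt_of_nonneg zero_le_one (by fun_prop)
    (fun x hx ↦ hasDerivAt_arcsin_two_mul_sub_one hx) (fun x _ ↦ by positivity) using 1
  norm_num

theorem integral_one_add_div_sqrt_one_sub_mul_self :
    IntervalIntegrable (fun g ↦ (1 + g) / √((1 - g) * g)) volume 0 1 ∧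
      ∫ g in (0 : ℝ)..1, (1 + g) / √((1 - g) * g) = 3 * π / 2 := by
  have hderiv (x : ℝ) (hx : x ∈ Ioo (0 : ℝ) 1) :
      HasDerivAt (fun g ↦ 3 / 2 * arcsin (2 * g - 1) - √((1 - g) * g))
        ((1 + x) / √((1 - x) * x)) x := by
    have hq : 0 < (1 - x) * x := by nlinarith [hx.1, hx.2]
    have hpoly : HasDerivAt (fun g ↦ (1 - g) * g) (1 - 2 * x) x :=
      (((hasDerivAt_id' x).const_sub 1).mul (hasDerivAt_id' x)).congr_deriv (by ring)
    refine (((hasDerivAt_arcsin_two_mul_sub_one hx).const_mul (3 / 2)).sub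
      (hpoly.sqrt hq.ne')).congr_deriv ?_
    field_simp
    ring
  convert integral_eq_sub_of_hasDerivAt_of_nonneg zero_le_one (by fun_prop) hderiv
    (fun x hx ↦ by have := hx.1; positivity) using 2
  norm_num
  ring

theorem one_div_sqrt_two_thirds_mul_eq {g : ℝ} (hg : g ∈ Icc (0 : ℝ) 1) (e : ℝ) :
    1 / √((2 / 3) * (1 - g) * g * (e * g + 6 + e)) =
      1 / 2 * (1 / √((1 - g) * g)) / √(1 + e * ((1 + g) / 6)) := by
  have hq : 0 ≤ (1 - g) * g := mul_nonneg (by linarith [hg.2]) hg.1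
  rw [show (2 / 3) * (1 - g) * g * (e * g + 6 + e) =
      2 ^ 2 * ((1 - g) * g) * (1 + e * ((1 + g) / 6)) by ring,
    sqrt_mul (by positivity), sqrt_mul (by positivity), sqrt_sq zero_le_two]
  simp only [div_eq_mul_inv, mul_inv]
  ring

/-- The right derivative of `e1 ↦ I₊(e1, 0)` at `0` equals
`-(1/24)∫₀¹ (1+g)/√((1-g)g) dg = -π/16`. -/
theorem Iplus_zero_right_deriv_at_zero :
    Filter.Tendsto
      (fun e1 : ℝ =>
        ((∫ g in (0:ℝ)..1,
            1 / Real.sqrt ((2/3) * (1 - g) * g * (e1 * g + 6 + e1))) - π/2) / e1)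
      (nhdsWithin 0 (Set.Ioi 0))
      (nhds (-(1/24) * ∫ g in (0:ℝ)..1, (1 + g) / Real.sqrt ((1 - g) * g))) ∧
    (-(1/24) * ∫ g in (0:ℝ)..1, (1 + g) / Real.sqrt ((1 - g) * g)) = -(π/16) := by
  obtain ⟨hA_int, hA⟩ := integral_one_div_sqrt_one_sub_mul_self
  obtain ⟨hB_int, hB⟩ := integral_one_add_div_sqrt_one_sub_mul_self
  have hwc : (fun g : ℝ ↦ 1 / 2 * (1 / √((1 - g) * g)) * ((1 + g) / 6)) =
      fun g ↦ 1 / 12 * ((1 + g) / √((1 - g) * g)) := by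
    funext g; ring
  have hlim := tendsto_slope_integral_div_sqrt_one_add (hA_int.const_mul (1 / 2))
    (hwc ▸ hB_int.const_mul (1 / 12)) (by fun_prop) fun g hg ↦ by
      have : 0 < g := by simpa using hg.1
      positivity
  rw [hwc, intervalIntegral.integral_const_mul, intervalIntegral.integral_const_mul, hA]
    at hlim
  refine ⟨?_, by rw [hB]; ring⟩
  rw [show ∀ B : ℝ, -(1 / 24) * B = -(1 / 2) * (1 / 12 * B) by intro; ring]
  refine hlim.congr fun e ↦ ?_
  rw [integral_congr fun g hg ↦ one_div_sqrt_two_thirds_mul_eq (by simpa using hg) e]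
  ring
end

section
/- Let $K(\gamma) = \int_0^1 \frac{dt}{\sqrt{(1-t^2)(1-\gamma^2 t^2)}}$ and $E(\gamma) = \int_0^1 \frac{\sqrt{1-\gamma^2 t^2}}{\sqrt{1-t^2}}\,dt$ be the complete elliptic integrals of the first and second kind. Then the function $H(\gamma) = [(\gamma^2 - 2)K(\gamma) + 3E(\gamma)]\,K(\gamma)$ is strictly decreasing on $[0,1)$ and maps $[0,1)$ onto $(-\infty, \pi^2/4]$. -/
/-!
Substituting `t = sin θ` turns `K` and `E` into `∫₀^{π/2} Δ⁻¹` and `∫₀^{π/2} Δ` with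
`Δ = √(1 - γ² sin² θ)`, integrands that are smooth in `γ` for `γ² < 1`. Differentiating under the
integral sign and using `(1 - γ²) ∫₀^{π/2} Δ⁻³ = E` (the derivative of `γ² sin θ cos θ / Δ` is
`Δ - (1 - γ²) Δ⁻³`) gives Legendre's formulas `γ (1 - γ²) K' = E - (1 - γ²) K` and `γ E' = E - K`,
hence `γ (1 - γ²) H' = 3E² - 2(2 - γ²) E K + (1 - γ²) K²`. This quadratic in `E` is convex and
negative at both ends of the interval `(1 - γ²) K < E < (1 - γ²/2) K`, whose two bounds are
integrals of positive functions. Finally `H(0) = π²/4`, and `H ≤ K (3π/2 - K) → -∞` because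
`K(γ) ≥ -log (1 - γ²) / 2`.
-/

open Real Set

/-- Complete elliptic integral of the first kind. -/
noncomputable def ellK (γ : ℝ) : ℝ :=
  ∫ t in (0:ℝ)..1, 1 / Real.sqrt ((1 - t^2) * (1 - γ^2 * t^2))

/-- Complete elliptic integral of the second kind. -/
noncomputable def ellE (γ : ℝ) : ℝ :=
  ∫ t in (0:ℝ)..1, Real.sqrt (1 - γ^2 * t^2) / Real.sqrt (1 - t^2)

open Filter Topology MeasureTheory
open scoped Interval

theorem hasDerivAt_integral_of_continuousOn {E : Type*} [NormedAddCommGroup E] [NormedSpace ℝ E]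
    {F F' : ℝ → ℝ → E} {U : Set ℝ} {a b x₀ : ℝ} (hU : IsOpen U) (hx₀ : x₀ ∈ U)
    (hF : ∀ x ∈ U, ContinuousOn (F x) [[a, b]])
    (hF' : ContinuousOn (Function.uncurry F') (U ×ˢ [[a, b]]))
    (hderiv : ∀ x ∈ U, ∀ t ∈ [[a, b]], HasDerivAt (F · t) (F' x t) x) :
    HasDerivAt (fun x => ∫ t in a..b, F x t) (∫ t in a..b, F' x₀ t) x₀ := by
  obtain ⟨r, hr, hball⟩ := Metric.nhds_basis_closedBall.mem_iff.1 (hU.mem_nhds hx₀)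
  obtain ⟨C, hC⟩ := ((isCompact_closedBall x₀ r).prod isCompact_uIcc).exists_bound_of_continuousOn
    (hF'.mono (prod_mono hball subset_rfl))
  have hF'x₀ : ContinuousOn (F' x₀) [[a, b]] :=
    hF'.comp (Continuous.continuousOn (Continuous.prodMk_right x₀)) fun _ ht => ⟨hx₀, ht⟩
  refine (intervalIntegral.hasDerivAt_integral_of_dominated_loc_of_deriv_le (bound := fun _ => C)
    (Metric.closedBall_mem_nhds x₀ hr) ?_ (hF x₀ hx₀).intervalIntegrable
    ((hF'x₀.mono uIoc_subset_uIcc).aestronglyMeasurable measurableSet_uIoc) ?_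
    intervalIntegrable_const ?_).2
  · filter_upwards [hU.mem_nhds hx₀] with x hx
    exact ((hF x hx).mono uIoc_subset_uIcc).aestronglyMeasurable measurableSet_uIoc
  · exact ae_of_all _ fun t ht x hx => hC (x, t) ⟨hx, uIoc_subset_uIcc ht⟩
  · exact ae_of_all _ fun t ht x hx => hderiv x (hball hx) t (uIoc_subset_uIcc ht)

theorem integral_div_sqrt_one_sub_sq_eq_integral_sin (f : ℝ → ℝ) :
    ∫ t in (0:ℝ)..1, f t / √(1 - t ^ 2) = ∫ θ in (0:ℝ)..π / 2, f (sin θ) := by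
  have hsub := integral_Icc_deriv_smul_of_deriv_nonneg (g := fun t => f t / √(1 - t ^ 2))
    continuous_sin.continuousOn (fun θ _ => hasDerivAt_sin θ)
    (fun θ hθ => (cos_pos_of_mem_Ioo ⟨by linarith [hθ.1, pi_pos], hθ.2⟩).le) pi_div_two_pos.le
  rw [sin_zero, sin_pi_div_two] at hsub
  rw [intervalIntegral.integral_of_le zero_le_one,
    intervalIntegral.integral_of_le pi_div_two_pos.le, ← integral_Icc_eq_integral_Ioc, ← hsub,
    integral_Icc_eq_integral_Ioo, integral_Ioc_eq_integral_Ioo]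
  refine setIntegral_congr_fun measurableSet_Ioo fun θ hθ => ?_
  have hcos : 0 < cos θ := cos_pos_of_mem_Ioo ⟨by linarith [hθ.1, pi_pos], hθ.2⟩
  rw [← cos_eq_sqrt_one_sub_sin_sq (by linarith [hθ.1, pi_pos]) hθ.2.le, smul_eq_mul,
    mul_div_cancel₀ _ hcos.ne']

theorem image_Ico_eq_Iic_of_antitoneOn {f : ℝ → ℝ} {a b : ℝ} (hab : a < b)
    (hf : ContinuousOn f (Ico a b)) (hanti : AntitoneOn f (Ico a b))
    (hlim : Tendsto f (𝓝[<] b) atBot) : f '' Ico a b = Iic (f a) := by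
  have ha : a ∈ Ico a b := left_mem_Ico.2 hab
  refine Subset.antisymm (image_subset_iff.2 fun x hx => hanti ha hx hx.1) fun y hy => ?_
  obtain ⟨c, hcy, hc⟩ :=
    ((hlim.eventually (eventually_le_atBot y)).and (Ioo_mem_nhdsLT hab)).exists
  have hsub : Icc a c ⊆ Ico a b := Icc_subset_Ico_right hc.2
  obtain ⟨x, hx, rfl⟩ := intermediate_value_Icc' hc.1.le (hf.mono hsub) ⟨hcy, hy⟩
  exact ⟨x, hsub hx, rfl⟩

noncomputable def deltaIntegral (p k : ℝ) : ℝ :=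
  ∫ θ in (0:ℝ)..π / 2, (1 - k ^ 2 * sin θ ^ 2) ^ p

section
variable {k : ℝ}

theorem one_sub_sq_mul_sin_sq_pos (hk : k ^ 2 < 1) (θ : ℝ) : 0 < 1 - k ^ 2 * sin θ ^ 2 := by
  nlinarith [sin_sq_le_one θ, sq_nonneg k, sq_nonneg (sin θ)]

theorem continuous_rpow_one_sub_sq_mul_sin_sq (hk : k ^ 2 < 1) (p : ℝ) :
    Continuous fun θ => (1 - k ^ 2 * sin θ ^ 2) ^ p :=
  (by fun_prop : Continuous fun θ => 1 - k ^ 2 * sin θ ^ 2).rpow_const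
    fun θ => Or.inl (one_sub_sq_mul_sin_sq_pos hk θ).ne'

theorem intervalIntegrable_rpow_one_sub_sq_mul_sin_sq (hk : k ^ 2 < 1) (p a b : ℝ) :
    IntervalIntegrable (fun θ => (1 - k ^ 2 * sin θ ^ 2) ^ p) volume a b :=
  (continuous_rpow_one_sub_sq_mul_sin_sq hk p).intervalIntegrable a b

theorem deltaIntegral_pos (hk : k ^ 2 < 1) (p : ℝ) : 0 < deltaIntegral p k :=
  intervalIntegral.intervalIntegral_pos_of_pos_on
    (intervalIntegrable_rpow_one_sub_sq_mul_sin_sq hk p _ _)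
    (fun θ _ => rpow_pos_of_pos (one_sub_sq_mul_sin_sq_pos hk θ) p) pi_div_two_pos

theorem hasDerivAt_deltaIntegral (hk : k ^ 2 < 1) (p : ℝ) :
    HasDerivAt (deltaIntegral p)
      (-2 * p * k * ∫ θ in (0:ℝ)..π / 2, sin θ ^ 2 * (1 - k ^ 2 * sin θ ^ 2) ^ (p - 1)) k := by
  have hU : IsOpen {x : ℝ | x ^ 2 < 1} := isOpen_lt (by fun_prop) continuous_const
  rw [← intervalIntegral.integral_const_mul]
  refine hasDerivAt_integral_of_continuousOn (a := 0) (b := π / 2)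
    (F' := fun x θ => -2 * p * x * (sin θ ^ 2 * (1 - x ^ 2 * sin θ ^ 2) ^ (p - 1))) hU hk
    (fun x hx => (continuous_rpow_one_sub_sq_mul_sin_sq hx p).continuousOn) ?_ ?_
  · refine ContinuousOn.mul (by fun_prop) (ContinuousOn.mul (by fun_prop) ?_)
    exact (Continuous.continuousOn (by fun_prop)).rpow_const
      fun x hx => Or.inl (one_sub_sq_mul_sin_sq_pos hx.1 x.2).ne'
  · intro x hx θ _
    have := (((hasDerivAt_pow 2 x).mul_const (sin θ ^ 2)).const_sub 1).rpow_const
      (p := p) (Or.inl (one_sub_sq_mul_sin_sq_pos hx θ).ne')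
    refine this.congr_deriv ?_
    norm_num
    ring

theorem sq_mul_integral_sin_sq_mul_rpow_sub_one (hk : k ^ 2 < 1) (p : ℝ) :
    k ^ 2 * ∫ θ in (0:ℝ)..π / 2, sin θ ^ 2 * (1 - k ^ 2 * sin θ ^ 2) ^ (p - 1) =
      deltaIntegral (p - 1) k - deltaIntegral p k := by
  have hI := fun p => intervalIntegrable_rpow_one_sub_sq_mul_sin_sq hk p 0 (π / 2)
  rw [deltaIntegral, deltaIntegral, ← intervalIntegral.integral_const_mul,
    ← intervalIntegral.integral_sub (hI _) (hI _)]
  refine intervalIntegral.integral_congr fun θ _ => ?_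
  have hb := (one_sub_sq_mul_sin_sq_pos hk θ).ne'
  rw [rpow_sub_one hb]
  field_simp
  ring

theorem hasDerivAt_deltaIntegral_of_ne_zero (hk : k ^ 2 < 1) (hk0 : k ≠ 0) (p : ℝ) :
    HasDerivAt (deltaIntegral p) (2 * p * (deltaIntegral p k - deltaIntegral (p - 1) k) / k) k := by
  convert hasDerivAt_deltaIntegral hk p using 1
  have h := sq_mul_integral_sin_sq_mul_rpow_sub_one hk p
  rw [div_eq_iff hk0]
  linear_combination 2 * p * h

theorem hasDerivAt_sq_mul_sin_mul_cos_mul_rpow (hk : k ^ 2 < 1) (θ : ℝ) :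
    HasDerivAt (fun θ => k ^ 2 * sin θ * cos θ * (1 - k ^ 2 * sin θ ^ 2) ^ (-1/2 : ℝ))
      ((1 - k ^ 2 * sin θ ^ 2) ^ (1/2 : ℝ) - (1 - k ^ 2) * (1 - k ^ 2 * sin θ ^ 2) ^ (-3/2 : ℝ))
      θ := by
  have hb := one_sub_sq_mul_sin_sq_pos hk θ
  have h := ((((hasDerivAt_sin θ).const_mul (k ^ 2)).mul (hasDerivAt_cos θ))).mul
    ((((hasDerivAt_sin θ).pow 2).const_mul (k ^ 2)).const_sub 1 |>.rpow_const
      (p := -1/2) (Or.inl hb.ne'))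
  refine h.congr_deriv ?_
  simp only [Pi.pow_apply, Pi.mul_apply, Nat.cast_ofNat]
  rw [show (-1/2 : ℝ) - 1 = -3/2 by norm_num, show (1/2 : ℝ) = -3/2 + (2 : ℕ) by norm_num,
    show (-1/2 : ℝ) = -3/2 + (1 : ℕ) by norm_num, rpow_add_natCast hb.ne', rpow_add_natCast hb.ne',
    pow_one]
  linear_combination k ^ 2 * (1 - k ^ 2 * sin θ ^ 2) ^ (-3/2 : ℝ) * sin_sq_add_cos_sq θ

theorem one_sub_sq_mul_deltaIntegral_neg_three_halves (hk : k ^ 2 < 1) :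
    (1 - k ^ 2) * deltaIntegral (-3/2) k = deltaIntegral (1/2) k := by
  have hI := fun p => intervalIntegrable_rpow_one_sub_sq_mul_sin_sq hk p 0 (π / 2)
  have h := intervalIntegral.integral_eq_sub_of_hasDerivAt
    (fun θ _ => hasDerivAt_sq_mul_sin_mul_cos_mul_rpow hk θ) ((hI _).sub ((hI _).const_mul _))
  rw [intervalIntegral.integral_sub (hI _) ((hI _).const_mul _),
    intervalIntegral.integral_const_mul] at h
  simp only [sin_zero, cos_pi_div_two, mul_zero, zero_mul, sub_zero] at h
  rw [deltaIntegral, deltaIntegral]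
  linarith

theorem one_sub_sq_mul_deltaIntegral_lt (hk : k ^ 2 < 1) (hk0 : k ≠ 0) :
    (1 - k ^ 2) * deltaIntegral (-1/2) k < deltaIntegral (1/2) k := by
  have hI := fun p => intervalIntegrable_rpow_one_sub_sq_mul_sin_sq hk p 0 (π / 2)
  rw [← sub_pos, deltaIntegral, deltaIntegral, ← intervalIntegral.integral_const_mul,
    ← intervalIntegral.integral_sub (hI _) ((hI _).const_mul _)]
  refine intervalIntegral.intervalIntegral_pos_of_pos_on ((hI _).sub ((hI _).const_mul _))
    (fun θ hθ => ?_) pi_div_two_pos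
  have hb := one_sub_sq_mul_sin_sq_pos hk θ
  have hcos : 0 < cos θ := cos_pos_of_mem_Ioo ⟨by linarith [hθ.1, pi_pos], hθ.2⟩
  have h : (1 - k ^ 2 * sin θ ^ 2) ^ (1/2 : ℝ)
      - (1 - k ^ 2) * (1 - k ^ 2 * sin θ ^ 2) ^ (-1/2 : ℝ)
      = k ^ 2 * cos θ ^ 2 * (1 - k ^ 2 * sin θ ^ 2) ^ (-1/2 : ℝ) := by
    rw [show (1/2 : ℝ) = -1/2 + (1 : ℕ) by norm_num, rpow_add_natCast hb.ne', pow_one]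
    linear_combination -(1 - k ^ 2 * sin θ ^ 2) ^ (-1/2 : ℝ) * k ^ 2 * sin_sq_add_cos_sq θ
  rw [h]
  have := rpow_pos_of_pos hb (-1/2)
  positivity

theorem two_mul_deltaIntegral_lt (hk : k ^ 2 < 1) (hk0 : k ≠ 0) :
    2 * deltaIntegral (1/2) k < (2 - k ^ 2) * deltaIntegral (-1/2) k := by
  have hJ := one_sub_sq_mul_deltaIntegral_neg_three_halves hk
  have hI := fun p => intervalIntegrable_rpow_one_sub_sq_mul_sin_sq hk p 0 (π / 2)
  have h : (2 - k ^ 2) * deltaIntegral (-1/2) k - 2 * deltaIntegral (1/2) k =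
      ∫ θ in (0:ℝ)..π / 2, ((2 - k ^ 2) * (1 - k ^ 2 * sin θ ^ 2) ^ (-1/2 : ℝ)
        - (1 - k ^ 2 * sin θ ^ 2) ^ (1/2 : ℝ)
        - (1 - k ^ 2) * (1 - k ^ 2 * sin θ ^ 2) ^ (-3/2 : ℝ)) := by
    rw [intervalIntegral.integral_sub (((hI _).const_mul _).sub (hI _)) ((hI _).const_mul _),
      intervalIntegral.integral_sub ((hI _).const_mul _) (hI _),
      intervalIntegral.integral_const_mul, intervalIntegral.integral_const_mul, ← deltaIntegral,
      ← deltaIntegral, ← deltaIntegral, hJ]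
    ring
  rw [← sub_pos, h]
  refine intervalIntegral.intervalIntegral_pos_of_pos_on
    ((((hI _).const_mul _).sub (hI _)).sub ((hI _).const_mul _)) (fun θ hθ => ?_) pi_div_two_pos
  have hb := one_sub_sq_mul_sin_sq_pos hk θ
  have hsin : 0 < sin θ := sin_pos_of_pos_of_lt_pi hθ.1 (by linarith [hθ.2, pi_pos])
  have hcos : 0 < cos θ := cos_pos_of_mem_Ioo ⟨by linarith [hθ.1, pi_pos], hθ.2⟩
  have h : (2 - k ^ 2) * (1 - k ^ 2 * sin θ ^ 2) ^ (-1/2 : ℝ)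
      - (1 - k ^ 2 * sin θ ^ 2) ^ (1/2 : ℝ) - (1 - k ^ 2) * (1 - k ^ 2 * sin θ ^ 2) ^ (-3/2 : ℝ)
      = k ^ 4 * sin θ ^ 2 * cos θ ^ 2 * (1 - k ^ 2 * sin θ ^ 2) ^ (-3/2 : ℝ) := by
    rw [show (1/2 : ℝ) = -3/2 + (2 : ℕ) by norm_num, show (-1/2 : ℝ) = -3/2 + (1 : ℕ) by norm_num,
      rpow_add_natCast hb.ne', rpow_add_natCast hb.ne', pow_one]
    linear_combination (-(k ^ 4 * sin θ ^ 2)) * (1 - k ^ 2 * sin θ ^ 2) ^ (-3/2 : ℝ) *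
      sin_sq_add_cos_sq θ
  rw [h]
  have := rpow_pos_of_pos hb (-3/2)
  positivity

theorem deltaIntegral_zero_right (p : ℝ) : deltaIntegral p 0 = π / 2 := by
  simp [deltaIntegral]

theorem deltaIntegral_half_le (hk : k ^ 2 < 1) : deltaIntegral (1/2) k ≤ π / 2 := by
  calc deltaIntegral (1/2) k ≤ ∫ _ in (0:ℝ)..π / 2, (1:ℝ) :=
        intervalIntegral.integral_mono_on pi_div_two_pos.le
          (intervalIntegrable_rpow_one_sub_sq_mul_sin_sq hk _ _ _) intervalIntegrable_const
          fun θ _ => rpow_le_one (one_sub_sq_mul_sin_sq_pos hk θ).le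
            (by nlinarith [sq_nonneg k, sq_nonneg (sin θ)]) (by norm_num)
    _ = π / 2 := by simp

theorem neg_log_div_two_le_deltaIntegral (hk : k ^ 2 < 1) :
    -log (1 - k ^ 2) / 2 ≤ deltaIntegral (-1/2) k := by
  set ε := √(1 - k ^ 2) with hε
  have hε0 : 0 < ε := sqrt_pos.2 (by linarith)
  have hbound : ∀ θ ∈ Icc 0 (π / 2),
      (π / 2 - θ + ε)⁻¹ ≤ (1 - k ^ 2 * sin θ ^ 2) ^ (-1/2 : ℝ) := by
    intro θ hθ
    have hb := one_sub_sq_mul_sin_sq_pos hk θ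
    have hcos : 0 ≤ cos θ := cos_nonneg_of_mem_Icc ⟨by linarith [hθ.1, pi_pos], hθ.2⟩
    have hcos_le : cos θ ≤ π / 2 - θ := by
      rw [← sin_pi_div_two_sub]; exact sin_le (by linarith [hθ.2])
    have hsq : 1 - k ^ 2 * sin θ ^ 2 ≤ (cos θ + ε) ^ 2 := by
      have := sq_sqrt (show 0 ≤ 1 - k ^ 2 by linarith)
      nlinarith [sin_sq_add_cos_sq θ, sin_sq_le_one θ, mul_nonneg hcos hε0.le]
    rw [show (-1/2 : ℝ) = -(1/2) by norm_num, rpow_neg hb.le, ← sqrt_eq_rpow]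
    gcongr
    calc √(1 - k ^ 2 * sin θ ^ 2) ≤ cos θ + ε := sqrt_le_iff.2 ⟨by positivity, hsq⟩
      _ ≤ π / 2 - θ + ε := by linarith
  have hint : ∫ θ in (0:ℝ)..π / 2, (π / 2 - θ + ε)⁻¹ = log ((π / 2 + ε) / ε) := by
    rw [intervalIntegral.integral_comp_sub_left (fun x => (x + ε)⁻¹),
      intervalIntegral.integral_comp_add_right (fun x => x⁻¹), integral_inv_of_pos] <;>
    simp only [sub_self, sub_zero, zero_add] <;> positivity
  have hlog : -log (1 - k ^ 2) / 2 ≤ log ((π / 2 + ε) / ε) := by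
    rw [log_div (by positivity) hε0.ne', hε, log_sqrt (by linarith)]
    have : 0 ≤ log (π / 2 + ε) := log_nonneg (by linarith [pi_gt_three])
    linarith
  refine hlog.trans (hint ▸ intervalIntegral.integral_mono_on pi_div_two_pos.le ?_
    (intervalIntegrable_rpow_one_sub_sq_mul_sin_sq hk _ _ _) hbound)
  refine (ContinuousOn.inv₀ (f := fun θ => π / 2 - θ + ε) (by fun_prop)
    fun θ hθ => ?_).intervalIntegrable
  rw [uIcc_of_le pi_div_two_pos.le] at hθ
  linarith [hθ.2]

theorem ellK_eq_deltaIntegral (hk : k ^ 2 ≤ 1) : ellK k = deltaIntegral (-1/2) k := by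
  rw [deltaIntegral, ellK,
    ← integral_div_sqrt_one_sub_sq_eq_integral_sin fun t => (1 - k ^ 2 * t ^ 2) ^ (-1/2 : ℝ)]
  refine intervalIntegral.integral_congr fun t ht => ?_
  rw [uIcc_of_le zero_le_one] at ht
  have ht2 : t ^ 2 ≤ 1 := by nlinarith [ht.1, ht.2]
  have hkt : 0 ≤ 1 - k ^ 2 * t ^ 2 := by nlinarith [sq_nonneg k, sq_nonneg t]
  rw [sqrt_mul (by linarith), show (-1/2 : ℝ) = -(1/2) by norm_num, rpow_neg hkt,
    ← sqrt_eq_rpow, one_div, mul_inv, div_eq_mul_inv, mul_comm]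

theorem ellE_eq_deltaIntegral : ellE = deltaIntegral (1/2) := by
  ext k
  rw [deltaIntegral, ellE,
    ← integral_div_sqrt_one_sub_sq_eq_integral_sin fun t => (1 - k ^ 2 * t ^ 2) ^ (1/2 : ℝ)]
  simp only [sqrt_eq_rpow]

theorem ellK_eventuallyEq_deltaIntegral (hk : k ^ 2 < 1) : ellK =ᶠ[𝓝 k] deltaIntegral (-1/2) := by
  filter_upwards [(isOpen_lt (continuous_pow 2) continuous_const).mem_nhds
    (show k ∈ {x : ℝ | x ^ 2 < 1} from hk)] with x hx
  exact ellK_eq_deltaIntegral (le_of_lt hx)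

theorem ellK_pos (hk : k ^ 2 < 1) : 0 < ellK k :=
  ellK_eq_deltaIntegral hk.le ▸ deltaIntegral_pos hk _

theorem continuousAt_ellK (hk : k ^ 2 < 1) : ContinuousAt ellK k :=
  (hasDerivAt_deltaIntegral hk _).continuousAt.congr_of_eventuallyEq
    (ellK_eventuallyEq_deltaIntegral hk)

theorem continuousAt_ellE (hk : k ^ 2 < 1) : ContinuousAt ellE k :=
  ellE_eq_deltaIntegral ▸ (hasDerivAt_deltaIntegral hk _).continuousAt

theorem hasDerivAt_ellK (hk : k ^ 2 < 1) (hk0 : k ≠ 0) :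
    HasDerivAt ellK ((ellE k - (1 - k ^ 2) * ellK k) / (k * (1 - k ^ 2))) k := by
  refine ((hasDerivAt_deltaIntegral_of_ne_zero hk hk0 _).congr_of_eventuallyEq
    (ellK_eventuallyEq_deltaIntegral hk)).congr_deriv ?_
  have hJ := one_sub_sq_mul_deltaIntegral_neg_three_halves hk
  have hk2 : 1 - k ^ 2 ≠ 0 := by linarith
  rw [ellK_eq_deltaIntegral hk.le, ellE_eq_deltaIntegral, ← hJ,
    show (-1/2 : ℝ) - 1 = -3/2 by norm_num]
  field_simp
  ring

theorem hasDerivAt_ellE (hk : k ^ 2 < 1) (hk0 : k ≠ 0) :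
    HasDerivAt ellE ((ellE k - ellK k) / k) k := by
  rw [ellK_eq_deltaIntegral hk.le, ellE_eq_deltaIntegral]
  refine (hasDerivAt_deltaIntegral_of_ne_zero hk hk0 _).congr_deriv ?_
  norm_num

noncomputable def ellH (k : ℝ) : ℝ := ((k ^ 2 - 2) * ellK k + 3 * ellE k) * ellK k

theorem ellH_zero : ellH 0 = π ^ 2 / 4 := by
  rw [ellH, ellK_eq_deltaIntegral (by norm_num), ellE_eq_deltaIntegral, deltaIntegral_zero_right,
    deltaIntegral_zero_right]
  ring

theorem continuousOn_ellH : ContinuousOn ellH (Ico 0 1) := fun k hk => by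
  have hk2 : k ^ 2 < 1 := pow_lt_one₀ hk.1 hk.2 two_ne_zero
  have := continuousAt_ellK hk2
  have := continuousAt_ellE hk2
  exact ContinuousAt.continuousWithinAt (by unfold ellH; fun_prop)

theorem hasDerivAt_ellH (hk : k ^ 2 < 1) (hk0 : k ≠ 0) :
    HasDerivAt ellH ((3 * ellE k ^ 2 - 2 * (2 - k ^ 2) * ellE k * ellK k + (1 - k ^ 2) * ellK k ^ 2)
      / (k * (1 - k ^ 2))) k := by
  have hK := hasDerivAt_ellK hk hk0
  have hE := hasDerivAt_ellE hk hk0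
  refine ((((hasDerivAt_pow 2 k).sub_const 2).mul hK).add (hE.const_mul 3)).mul hK |>.congr_deriv ?_
  have hk2 : 1 - k ^ 2 ≠ 0 := by linarith
  simp only [Pi.mul_apply, Pi.add_apply]
  field_simp
  ring

theorem strictAntiOn_ellH : StrictAntiOn ellH (Ico 0 1) := by
  refine strictAntiOn_of_deriv_neg (convex_Ico 0 1) continuousOn_ellH fun k hk => ?_
  rw [interior_Ico] at hk
  have hk2 : k ^ 2 < 1 := pow_lt_one₀ hk.1.le hk.2 two_ne_zero
  rw [(hasDerivAt_ellH hk2 hk.1.ne').deriv]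
  refine div_neg_of_neg_of_pos ?_ (mul_pos hk.1 (sub_pos.2 hk2))
  have hK := ellK_pos hk2
  have h₁ := one_sub_sq_mul_deltaIntegral_lt hk2 hk.1.ne'
  have h₂ := two_mul_deltaIntegral_lt hk2 hk.1.ne'
  rw [← ellK_eq_deltaIntegral hk2.le, ← ellE_eq_deltaIntegral] at h₁ h₂
  -- with `a = (1 - k²) K < E < b = (1 - k²/2) K`, the numerator equals
  -- `-3 (E - a)(b - E) - 2 (1 - k²) K (b - E) - (k² K / 2)(E - a)`
  nlinarith [mul_pos (sub_pos.2 h₁) (sub_pos.2 h₂),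
    mul_nonneg (mul_nonneg (sub_nonneg.2 hk2.le) hK.le) (sub_pos.2 h₂).le,
    mul_nonneg (mul_nonneg (sq_nonneg k) hK.le) (sub_pos.2 h₁).le]

theorem tendsto_ellK_nhdsLT_one : Tendsto ellK (𝓝[<] 1) atTop := by
  have h₀ : Tendsto (fun k : ℝ => 1 - k ^ 2) (𝓝[<] 1) (𝓝[>] 0) := by
    refine tendsto_nhdsWithin_iff.2 ⟨?_, ?_⟩
    · exact ((continuous_const.sub (continuous_pow 2)).tendsto' 1 0 (by norm_num)).mono_left
        nhdsWithin_le_nhds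
    · filter_upwards [Ioo_mem_nhdsLT zero_lt_one] with k hk
      exact sub_pos.2 (pow_lt_one₀ hk.1.le hk.2 two_ne_zero)
  refine tendsto_atTop_mono' _ ?_
    ((tendsto_neg_atBot_atTop.comp (tendsto_log_nhdsGT_zero.comp h₀)).atTop_div_const two_pos)
  filter_upwards [Ioo_mem_nhdsLT zero_lt_one] with k hk
  have hk2 : k ^ 2 < 1 := pow_lt_one₀ hk.1.le hk.2 two_ne_zero
  rw [ellK_eq_deltaIntegral hk2.le]
  exact neg_log_div_two_le_deltaIntegral hk2

theorem tendsto_ellH_nhdsLT_one : Tendsto ellH (𝓝[<] 1) atBot := by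
  have hK := tendsto_ellK_nhdsLT_one
  have hlin : Tendsto (fun k => 3 * (π / 2) - ellK k) (𝓝[<] 1) atBot :=
    tendsto_atBot_add_const_left _ _ (tendsto_neg_atTop_atBot.comp hK)
  refine tendsto_atBot_mono' _ ?_ (hK.atTop_mul_atBot₀ hlin)
  filter_upwards [Ioo_mem_nhdsLT zero_lt_one] with k hk
  have hk2 : k ^ 2 < 1 := pow_lt_one₀ hk.1.le hk.2 two_ne_zero
  have hK0 := ellK_pos hk2
  have hE : ellE k ≤ π / 2 := ellE_eq_deltaIntegral ▸ deltaIntegral_half_le hk2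
  rw [ellH]
  nlinarith [mul_le_mul_of_nonneg_right hE hK0.le, mul_pos hK0 hK0]

end

/-- The function `H(γ) = [(γ² - 2)K(γ) + 3E(γ)]K(γ)` is strictly decreasing on `[0,1)`
and maps `[0,1)` onto `(-∞, π²/4]`. -/
theorem H_strictAnti_and_surj :
    StrictAntiOn (fun γ : ℝ => ((γ^2 - 2) * ellK γ + 3 * ellE γ) * ellK γ)
      (Set.Ico 0 1) ∧
    (fun γ : ℝ => ((γ^2 - 2) * ellK γ + 3 * ellE γ) * ellK γ) '' Set.Ico 0 1 =
      Set.Iic (π^2 / 4) := by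
  change StrictAntiOn ellH (Ico 0 1) ∧ ellH '' Ico 0 1 = Iic (π ^ 2 / 4)
  refine ⟨strictAntiOn_ellH, ?_⟩
  rw [image_Ico_eq_Iic_of_antitoneOn zero_lt_one continuousOn_ellH strictAntiOn_ellH.antitoneOn
    tendsto_ellH_nhdsLT_one, ellH_zero]
end

section
/- Fix $\alpha > 0$ and for $\bar\gamma \in (0,1)$ define $e_2(\bar\gamma) = -2 - \frac{2}{\alpha^2}(2\bar\gamma^2 - 1)K(\bar\gamma)^2$. Then $e_2$ is strictly decreasing on $(0,1)$; i.e., $\frac{de_2}{d\bar\gamma} < 0$ for all $\bar\gamma \in (0,1)$. -/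
open Real Set MeasureTheory

lemma ellK_meas (γ : ℝ) :
    Measurable (fun t : ℝ => 1 / Real.sqrt ((1 - t^2) * (1 - γ^2 * t^2))) := by
  apply Measurable.div measurable_const
  exact Real.continuous_sqrt.measurable.comp (by fun_prop)

lemma ellK_integrable {γ : ℝ} (h1 : γ^2 < 1) :
    IntervalIntegrable (fun t : ℝ => 1 / Real.sqrt ((1 - t^2) * (1 - γ^2 * t^2)))
      volume 0 1 := by
  have hg2 : (0:ℝ) < 1 - γ^2 := by linarith
  have hmaj : IntervalIntegrable
      (fun t : ℝ => (1 / Real.sqrt (1 - γ^2)) * (1 - t) ^ (-(1/2) : ℝ)) volume 0 1 := by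
    have h := (intervalIntegral.intervalIntegrable_rpow' (r := -(1/2))
      (by norm_num) (a := 0) (b := 1)).comp_sub_left 1
    simp only [sub_zero, sub_self] at h
    exact (h.symm).const_mul _
  refine hmaj.mono_fun ((ellK_meas γ).aestronglyMeasurable) ?_
  rw [Filter.EventuallyLE, ae_restrict_iff' measurableSet_uIoc]
  filter_upwards with t ht
  rw [uIoc_of_le (by norm_num : (0:ℝ) ≤ 1)] at ht
  obtain ⟨ht0, ht1⟩ := ht
  have h1t : (0:ℝ) ≤ 1 - t := by linarith
  have e1 : 1 - γ^2 ≤ 1 - γ^2 * t^2 := by nlinarith [mul_nonneg (sq_nonneg γ) (mul_nonneg h1t (by linarith : (0:ℝ) ≤ 1 + t))]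
  have key : (1 - t) * (1 - γ^2) ≤ (1 - t^2) * (1 - γ^2 * t^2) := by
    nlinarith [mul_nonneg h1t (by linarith : (0:ℝ) ≤ 1 - γ^2*t^2), mul_le_mul_of_nonneg_left e1 h1t]
  have hrw : (1 - t) ^ (-(1/2) : ℝ) = 1 / Real.sqrt (1 - t) := by
    rw [Real.rpow_neg h1t, Real.sqrt_eq_rpow, one_div]
    norm_num
  rw [norm_mul, hrw]
  have h2 : ‖1 / Real.sqrt ((1 - t^2) * (1 - γ^2 * t^2))‖
      = 1 / Real.sqrt ((1 - t^2) * (1 - γ^2 * t^2)) := by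
    rw [Real.norm_eq_abs, abs_of_nonneg]; positivity
  rw [h2]
  have h3 : ‖1 / Real.sqrt (1 - γ^2)‖ = 1 / Real.sqrt (1 - γ^2) := by
    rw [Real.norm_eq_abs, abs_of_nonneg]; positivity
  have h4 : ‖1 / Real.sqrt (1 - t)‖ = 1 / Real.sqrt (1 - t) := by
    rw [Real.norm_eq_abs, abs_of_nonneg]; positivity
  rw [h3, h4]
  rcases eq_or_lt_of_le ht1 with heq | hlt
  · subst heq  -- wrong direction; handle below
    norm_num
  · have hpos : (0:ℝ) < (1 - t) * (1 - γ^2) := by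
      have : (0:ℝ) < 1 - t := by linarith
      positivity
    have hsq : Real.sqrt ((1 - t) * (1 - γ^2)) ≤ Real.sqrt ((1 - t^2) * (1 - γ^2 * t^2)) :=
      Real.sqrt_le_sqrt key
    have := one_div_le_one_div_of_le (Real.sqrt_pos.2 hpos) hsq
    calc 1 / Real.sqrt ((1 - t^2) * (1 - γ^2 * t^2))
        ≤ 1 / Real.sqrt ((1 - t) * (1 - γ^2)) := this
      _ = 1 / Real.sqrt (1 - γ^2) * (1 / Real.sqrt (1 - t)) := by
          rw [Real.sqrt_mul h1t, one_div, mul_inv, ← one_div, ← one_div]; ring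

lemma ellK_pos_s16 {γ : ℝ} (h1 : γ^2 < 1) : 0 < ellK γ := by
  apply intervalIntegral.intervalIntegral_pos_of_pos_on (ellK_integrable h1) _ one_pos
  intro t ht
  obtain ⟨ht0, ht1⟩ := ht
  have h1t : (0:ℝ) < 1 - t^2 := by nlinarith
  have h2 : (0:ℝ) < 1 - γ^2 * t^2 := by nlinarith [sq_nonneg γ, sq_nonneg (γ*t)]
  positivity

lemma ellK_mono {a b : ℝ} (h0 : 0 ≤ a) (hab : a ≤ b) (hb : b < 1) : ellK a ≤ ellK b := by
  have hb2 : b^2 < 1 := by nlinarith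
  have ha2 : a^2 < 1 := by nlinarith
  apply intervalIntegral.integral_mono_on zero_le_one (ellK_integrable ha2)
    (ellK_integrable hb2)
  intro t ht
  obtain ⟨ht0, ht1⟩ := ht
  rcases eq_or_lt_of_le ht1 with heq | hlt
  · rw [heq]; norm_num
  · have h1t : (0:ℝ) < 1 - t^2 := by nlinarith
    have hbd : (0:ℝ) < 1 - b^2 * t^2 := by nlinarith [mul_nonneg (sq_nonneg b) (sq_nonneg t)]
    have had : 1 - b^2 * t^2 ≤ 1 - a^2 * t^2 := by
      nlinarith [mul_le_mul_of_nonneg_right (by nlinarith : a^2 ≤ b^2) (sq_nonneg t)]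
    have hpb : (0:ℝ) < (1 - t^2) * (1 - b^2 * t^2) := by positivity
    apply one_div_le_one_div_of_le (Real.sqrt_pos.2 hpb)
    apply Real.sqrt_le_sqrt
    nlinarith

lemma ellK_strict {u v : ℝ} (hu : 0 < u) (huv : u < v) (hv1 : v < 1) (hv : 2*v^2 - 1 ≤ 0) :
    Real.sqrt (1 - 2*v^2) * ellK v < Real.sqrt (1 - 2*u^2) * ellK u := by
  have hv2 : v^2 < 1 := by nlinarith
  have hu2 : u^2 < 1 := by nlinarith
  have huv2 : u^2 < v^2 := by nlinarith
  have hnv : (0:ℝ) ≤ 1 - 2*v^2 := by linarith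
  have hnu : (0:ℝ) ≤ 1 - 2*u^2 := by nlinarith
  have hiu := (ellK_integrable hu2).const_mul (Real.sqrt (1 - 2*u^2))
  have hiv := (ellK_integrable hv2).const_mul (Real.sqrt (1 - 2*v^2))
  have hmu : Real.sqrt (1 - 2*u^2) * ellK u
      = ∫ t in (0:ℝ)..1, Real.sqrt (1 - 2*u^2) * (1 / Real.sqrt ((1 - t^2) * (1 - u^2 * t^2))) := by
    rw [ellK, ← intervalIntegral.integral_const_mul]
  have hmv : Real.sqrt (1 - 2*v^2) * ellK v
      = ∫ t in (0:ℝ)..1, Real.sqrt (1 - 2*v^2) * (1 / Real.sqrt ((1 - t^2) * (1 - v^2 * t^2))) := by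
    rw [ellK, ← intervalIntegral.integral_const_mul]
  rw [hmu, hmv, ← sub_pos, ← intervalIntegral.integral_sub hiu hiv]
  apply intervalIntegral.intervalIntegral_pos_of_pos_on (hiu.sub hiv) _ one_pos
  intro t ht
  obtain ⟨ht0, ht1⟩ := ht
  have h1t : (0:ℝ) < 1 - t^2 := by nlinarith
  have hdu : (0:ℝ) < 1 - u^2 * t^2 := by nlinarith [mul_nonneg (sq_nonneg u) (sq_nonneg t)]
  have hdv : (0:ℝ) < 1 - v^2 * t^2 := by nlinarith [mul_nonneg (sq_nonneg v) (sq_nonneg t)]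
  have hPu : (0:ℝ) < (1 - t^2) * (1 - u^2 * t^2) := by positivity
  have hPv : (0:ℝ) < (1 - t^2) * (1 - v^2 * t^2) := by positivity
  rw [sub_pos]
  have eu : Real.sqrt (1 - 2*u^2) * (1 / Real.sqrt ((1 - t^2) * (1 - u^2 * t^2)))
      = Real.sqrt ((1 - 2*u^2) / ((1 - t^2) * (1 - u^2 * t^2))) := by
    rw [Real.sqrt_div hnu]; ring
  have ev : Real.sqrt (1 - 2*v^2) * (1 / Real.sqrt ((1 - t^2) * (1 - v^2 * t^2)))
      = Real.sqrt ((1 - 2*v^2) / ((1 - t^2) * (1 - v^2 * t^2))) := by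
    rw [Real.sqrt_div hnv]; ring
  rw [eu, ev]
  apply Real.sqrt_lt_sqrt (by positivity)
  rw [div_lt_div_iff₀ hPv hPu]
  have core : (1 - 2*v^2) * (1 - u^2 * t^2) < (1 - 2*u^2) * (1 - v^2 * t^2) := by
    nlinarith [mul_pos (sub_pos.2 huv2) (by nlinarith : (0:ℝ) < 2 - t^2)]
  calc (1 - 2*v^2) * ((1 - t^2) * (1 - u^2 * t^2))
      = (1 - t^2) * ((1 - 2*v^2) * (1 - u^2 * t^2)) := by ring
    _ < (1 - t^2) * ((1 - 2*u^2) * (1 - v^2 * t^2)) := by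
        exact mul_lt_mul_of_pos_left core h1t
    _ = (1 - 2*u^2) * ((1 - t^2) * (1 - v^2 * t^2)) := by ring

/-- For fixed `α > 0`, `γ̄ ↦ e2(γ̄) = -2 - (2/α²)(2γ̄² - 1)K(γ̄)²` is strictly
decreasing on `(0,1)`. -/
theorem e2_strictAntiOn (α : ℝ) (hα : 0 < α) :
    StrictAntiOn (fun γ : ℝ => -2 - (2/α^2) * (2*γ^2 - 1) * (ellK γ)^2)
      (Set.Ioo 0 1) := by
  intro a ha b hb hab
  simp only
  have hc : (0:ℝ) < 2/α^2 := by positivity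
  obtain ⟨ha0, ha1⟩ := ha
  obtain ⟨hb0, hb1⟩ := hb
  have ha2 : a^2 < 1 := by nlinarith
  have hb2 : b^2 < 1 := by nlinarith
  have hKa := ellK_pos_s16 ha2
  have hKb := ellK_pos_s16 hb2
  have key : (2*a^2 - 1) * (ellK a)^2 < (2*b^2 - 1) * (ellK b)^2 := by
    by_cases hcase : 2*b^2 - 1 ≤ 0
    · have h := ellK_strict ha0 hab hb1 hcase
      have hnb : (0:ℝ) ≤ 1 - 2*b^2 := by linarith
      have hna : (0:ℝ) ≤ 1 - 2*a^2 := by nlinarith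
      have h0 : (0:ℝ) ≤ Real.sqrt (1 - 2*b^2) * ellK b := by positivity
      have h2 : (Real.sqrt (1 - 2*b^2) * ellK b)^2 < (Real.sqrt (1 - 2*a^2) * ellK a)^2 := by
        exact pow_lt_pow_left₀ h h0 two_ne_zero
      rw [mul_pow, mul_pow, Real.sq_sqrt hnb, Real.sq_sqrt hna] at h2
      nlinarith
    · push_neg at hcase
      by_cases hacase : 2*a^2 - 1 ≤ 0
      · have hL : (2*a^2 - 1) * (ellK a)^2 ≤ 0 :=
          mul_nonpos_of_nonpos_of_nonneg hacase (sq_nonneg _)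
        have hR : 0 < (2*b^2 - 1) * (ellK b)^2 := by positivity
        linarith
      · push_neg at hacase
        have hKab := ellK_mono ha0.le hab.le hb1
        have hsq : (ellK a)^2 ≤ (ellK b)^2 := by nlinarith
        have h1 : (2*a^2-1)*(ellK a)^2 ≤ (2*a^2-1)*(ellK b)^2 :=
          mul_le_mul_of_nonneg_left hsq hacase.le
        have h2 : (2*a^2-1)*(ellK b)^2 < (2*b^2-1)*(ellK b)^2 := by
          apply mul_lt_mul_of_pos_right (by nlinarith) (by positivity)
        linarith
  nlinarith [mul_lt_mul_of_pos_left key hc]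
end

section
/- For $e_1 > 0$ and $e_2 \in (-3 - e_1/2, 0)$, with $e_3 = -6 - e_1 - e_2$, the function $I_{2,1}(e_1, e_2) = \frac{\sqrt{6}K(\bar\gamma)}{\sqrt{6 + 2e_1 + e_2}} + \int_0^{e_1}\frac{df}{\sqrt{-\frac{2}{3}(f-e_1)(f-e_2)(f-e_3)}}$, where $\bar\gamma = \sqrt{(e_1-e_2)/(6+2e_1+e_2)}$, is strictly convex in $e_2$: $\frac{\partial^2 I_{2,1}}{\partial e_2^2}(e_1, e_2) > 0$. -/
open Real Set

open MeasureTheory intervalIntegral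

noncomputable def K1 (g : ℝ) : ℝ :=
  ∫ t in (0:ℝ)..1, g * t^2 * (1-t^2) / (Real.sqrt ((1-t^2) * (1-g^2*t^2)))^3

noncomputable def K2 (g : ℝ) : ℝ :=
  ∫ t in (0:ℝ)..1, (t^2*(1-t^2) / (Real.sqrt ((1-t^2) * (1-g^2*t^2)))^3
    + 3*g^2*t^4*(1-t^2)^2 / (Real.sqrt ((1-t^2) * (1-g^2*t^2)))^5)

/-- weight `1/√(c - t)` is interval integrable on `a..c`. -/
lemma wInt (a c : ℝ) : IntervalIntegrable (fun t => 1 / Real.sqrt (c - t)) volume a c := by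
  have h0 : IntervalIntegrable (fun x : ℝ => x ^ (-(1:ℝ)/2)) volume (c - a) (c - c) :=
    intervalIntegrable_rpow' (by norm_num)
  have h1 := h0.comp_sub_left c
  simp only [sub_sub_cancel] at h1
  apply h1.mono_fun
  · apply Measurable.aestronglyMeasurable
    fun_prop
  · filter_upwards with t
    simp only [norm_eq_abs]
    rcases le_or_gt (c - t) 0 with h | h
    · rw [Real.sqrt_eq_zero'.mpr (by linarith)]
      simpa using abs_nonneg _
    · have e : (1:ℝ) / Real.sqrt (c - t) = (c - t) ^ (-1/2 : ℝ) := by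
        rw [Real.sqrt_eq_rpow, one_div, ← Real.rpow_neg h.le]
        norm_num
      rw [e]

/-- Generic: differentiation under the integral sign with explicit bounds on an open ball. -/
lemma hasDerivAt_param (a b : ℝ) (hab : a < b) (F F' : ℝ → ℝ → ℝ) (x₀ ε : ℝ) (hε : 0 < ε)
    (bound : ℝ → ℝ) (hbi : IntervalIntegrable bound volume a b)
    (hmeas : ∀ x, AEStronglyMeasurable (F x) (volume.restrict (Set.uIoc a b)))
    (hmeas' : AEStronglyMeasurable (F' x₀) (volume.restrict (Set.uIoc a b)))
    (hFint : IntervalIntegrable (F x₀) volume a b)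
    (hbound : ∀ t ∈ Set.Ioo a b, ∀ x ∈ Metric.ball x₀ ε, |F' x t| ≤ bound t)
    (hdiff : ∀ t ∈ Set.Ioo a b, ∀ x ∈ Metric.ball x₀ ε, HasDerivAt (fun y => F y t) (F' x t) x) :
    IntervalIntegrable (F' x₀) volume a b ∧
      HasDerivAt (fun x => ∫ t in a..b, F x t) (∫ t in a..b, F' x₀ t) x₀ := by
  have hne : ∀ᵐ t : ℝ ∂volume, t ≠ b := by
    rw [ae_iff]
    simpa using measure_singleton b
  have hIoc : Set.uIoc a b = Set.Ioc a b := Set.uIoc_of_le hab.le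
  refine intervalIntegral.hasDerivAt_integral_of_dominated_loc_of_deriv_le (Metric.ball_mem_nhds x₀ hε)
    (Filter.Eventually.of_forall fun x => hmeas x) hFint hmeas' ?_ hbi ?_
  · filter_upwards [hne] with t ht htmem x hx
    rw [hIoc] at htmem
    exact hbound t ⟨htmem.1, lt_of_le_of_ne htmem.2 ht⟩ x hx
  · filter_upwards [hne] with t ht htmem x hx
    rw [hIoc] at htmem
    exact hdiff t ⟨htmem.1, lt_of_le_of_ne htmem.2 ht⟩ x hx

lemma Ppos {b x t : ℝ} (ht : t ∈ Ioo (0:ℝ) 1) (hx : |x| ≤ b) (hb : b < 1) :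
    0 < (1-t^2) * (1-x^2*t^2) := by
  obtain ⟨ht0, ht1⟩ := ht
  have h1 : 0 < 1 - t^2 := by nlinarith
  have hx1 := abs_le.mp hx
  have hx2 : x^2 ≤ b^2 := sq_le_sq' (by linarith) hx1.2
  have hb0 : 0 ≤ b := (abs_nonneg x).trans hx
  have h2 : 0 < 1 - b^2 := by nlinarith
  have h3 : x^2 * t^2 ≤ b^2 := by nlinarith
  have h4 : 0 < 1 - x^2*t^2 := by nlinarith
  exact mul_pos h1 h4

lemma sqrtP_lower {b x t : ℝ} (ht : t ∈ Ioo (0:ℝ) 1) (hx : |x| ≤ b) (hb : b < 1) :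
    Real.sqrt (1-t) * Real.sqrt (1-b^2) ≤ Real.sqrt ((1-t^2) * (1-x^2*t^2)) ∧
    (1-t) * (1-b^2) ≤ (1-t^2) * (1-x^2*t^2) := by
  obtain ⟨ht0, ht1⟩ := ht
  have h1 : 0 < 1 - t^2 := by nlinarith
  have hx1 := abs_le.mp hx
  have hx2 : x^2 ≤ b^2 := sq_le_sq' (by linarith) hx1.2
  have hb0 : 0 ≤ b := (abs_nonneg x).trans hx
  have h2 : 0 < 1 - b^2 := by nlinarith
  have hle : (1-t) * (1-b^2) ≤ (1-t^2) * (1-x^2*t^2) :=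
    mul_le_mul (by nlinarith) (by nlinarith) (by nlinarith) (by nlinarith)
  refine ⟨?_, hle⟩
  rw [← Real.sqrt_mul (by linarith)]
  exact Real.sqrt_le_sqrt hle

/-- derivative in `x` of the ellK integrand -/
lemma hasDerivAt_Kint {x t : ℝ} (hP : 0 < (1-t^2) * (1-x^2*t^2)) :
    HasDerivAt (fun y => 1 / Real.sqrt ((1 - t^2) * (1 - y^2 * t^2)))
      (x * t^2 * (1-t^2) / (Real.sqrt ((1-t^2) * (1-x^2*t^2)))^3) x := by
  have hs0 : 0 < Real.sqrt ((1-t^2) * (1-x^2*t^2)) := Real.sqrt_pos.mpr hP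
  have h2 : HasDerivAt (fun y : ℝ => 1 - y^2 * t^2) (-(2*x*t^2)) x := by
    simpa using (((hasDerivAt_pow 2 x).mul_const (t^2)).const_sub 1)
  have hP' : HasDerivAt (fun y : ℝ => (1-t^2) * (1-y^2*t^2)) ((1-t^2) * (-(2*x*t^2))) x :=
    h2.const_mul _
  have hs := hP'.sqrt hP.ne'
  have hd := (hasDerivAt_const x (1:ℝ)).div hs hs0.ne'
  refine hd.congr_deriv ?_
  generalize Real.sqrt ((1-t^2) * (1-x^2*t^2)) = s at hs0 ⊢
  field_simp
  ring

/-- derivative in `x` of the K1 integrand -/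
lemma hasDerivAt_K1int {x t : ℝ} (hP : 0 < (1-t^2) * (1-x^2*t^2)) :
    HasDerivAt (fun y => y * t^2 * (1-t^2) / (Real.sqrt ((1-t^2) * (1-y^2*t^2)))^3)
      (t^2*(1-t^2) / (Real.sqrt ((1-t^2) * (1-x^2*t^2)))^3
        + 3*x^2*t^4*(1-t^2)^2 / (Real.sqrt ((1-t^2) * (1-x^2*t^2)))^5) x := by
  have hs0 : 0 < Real.sqrt ((1-t^2) * (1-x^2*t^2)) := Real.sqrt_pos.mpr hP
  have h2 : HasDerivAt (fun y : ℝ => 1 - y^2 * t^2) (-(2*x*t^2)) x := by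
    simpa using (((hasDerivAt_pow 2 x).mul_const (t^2)).const_sub 1)
  have hP' : HasDerivAt (fun y : ℝ => (1-t^2) * (1-y^2*t^2)) ((1-t^2) * (-(2*x*t^2))) x :=
    h2.const_mul _
  have hs := hP'.sqrt hP.ne'
  have hs3 := hs.pow 3
  have hu : HasDerivAt (fun y : ℝ => y * t^2 * (1-t^2)) (t^2 * (1-t^2)) x := by
    simpa using ((hasDerivAt_id x).mul_const (t^2)).mul_const (1-t^2)
  have hd := hu.div hs3 (pow_ne_zero 3 hs0.ne')
  simp only [Pi.pow_apply] at hd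
  refine hd.congr_deriv ?_
  generalize Real.sqrt ((1-t^2) * (1-x^2*t^2)) = s at hs0 ⊢
  field_simp
  ring

lemma Pmid {b x t : ℝ} (ht : t ∈ Ioo (0:ℝ) 1) (hx : |x| ≤ b) (hb : b < 1) :
    (1-t^2) * (1-b^2) ≤ (1-t^2) * (1-x^2*t^2) := by
  obtain ⟨ht0, ht1⟩ := ht
  have h1 : 0 < 1 - t^2 := by nlinarith
  have hx1 := abs_le.mp hx
  have hx2 : x^2 ≤ b^2 := sq_le_sq' (by linarith) hx1.2
  apply mul_le_mul_of_nonneg_left _ h1.le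
  nlinarith

lemma bound0 {b x t : ℝ} (ht : t ∈ Ioo (0:ℝ) 1) (hx : |x| ≤ b) (hb : b < 1) :
    |1 / Real.sqrt ((1-t^2)*(1-x^2*t^2))| ≤
      (1/Real.sqrt (1-b^2)) * (1/Real.sqrt (1-t)) := by
  have hP := Ppos ht hx hb
  have hs0 : 0 < Real.sqrt ((1-t^2)*(1-x^2*t^2)) := Real.sqrt_pos.mpr hP
  have hlow := (sqrtP_lower ht hx hb).1
  have ht1 : 0 < 1 - t := by linarith [ht.2]
  have hb2 : 0 < 1 - b^2 := by nlinarith [(abs_nonneg x).trans hx]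
  have h1 : 0 < Real.sqrt (1-t) * Real.sqrt (1-b^2) := by positivity
  rw [abs_of_pos (by positivity)]
  calc 1 / Real.sqrt ((1-t^2)*(1-x^2*t^2)) ≤ 1 / (Real.sqrt (1-t) * Real.sqrt (1-b^2)) :=
        one_div_le_one_div_of_le h1 hlow
    _ = (1/Real.sqrt (1-b^2)) * (1/Real.sqrt (1-t)) := by
        rw [one_div_mul_one_div]; rw [mul_comm]

lemma bound1 {b x t : ℝ} (ht : t ∈ Ioo (0:ℝ) 1) (hx : |x| ≤ b) (hb : b < 1) :
    |x*t^2*(1-t^2) / (Real.sqrt ((1-t^2)*(1-x^2*t^2)))^3| ≤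
      (1/((1-b^2)*Real.sqrt (1-b^2))) * (1/Real.sqrt (1-t)) := by
  have hP := Ppos ht hx hb
  have hs0 : 0 < Real.sqrt ((1-t^2)*(1-x^2*t^2)) := Real.sqrt_pos.mpr hP
  have hlow := (sqrtP_lower ht hx hb).1
  have hmid := Pmid ht hx hb
  have ht1 : 0 < 1 - t := by linarith [ht.2]
  have ht2 : 0 < 1 - t^2 := by nlinarith [ht.1, ht.2]
  have hb2 : 0 < 1 - b^2 := by nlinarith [(abs_nonneg x).trans hx]
  have hsq : Real.sqrt ((1-t^2)*(1-x^2*t^2)) ^ 2 = (1-t^2)*(1-x^2*t^2) := Real.sq_sqrt hP.le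
  have hs3 : ((1-t^2)*(1-b^2)) * (Real.sqrt (1-t) * Real.sqrt (1-b^2)) ≤
      Real.sqrt ((1-t^2)*(1-x^2*t^2)) ^ 3 := by
    have e : Real.sqrt ((1-t^2)*(1-x^2*t^2)) ^ 3
        = ((1-t^2)*(1-x^2*t^2)) * Real.sqrt ((1-t^2)*(1-x^2*t^2)) := by
      conv_lhs => rw [show (3:ℕ) = 2 + 1 from rfl, pow_succ, hsq]
    rw [e]
    exact mul_le_mul hmid hlow (by positivity) hP.le
  have hnum : |x*t^2*(1-t^2)| ≤ 1-t^2 := by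
    have e : |x*t^2*(1-t^2)| = |x| * (t^2*(1-t^2)) := by
      rw [show x*t^2*(1-t^2) = x*(t^2*(1-t^2)) by ring, abs_mul,
        abs_of_nonneg (by nlinarith [ht.1, ht.2] : (0:ℝ) ≤ t^2*(1-t^2))]
    rw [e]
    have hb1 : |x| ≤ 1 := hx.trans hb.le
    have h1 : |x| * (t^2*(1-t^2)) ≤ 1 * (t^2*(1-t^2)) :=
      mul_le_mul_of_nonneg_right hb1 (by nlinarith [ht.1, ht.2])
    nlinarith [h1, sq_nonneg (1-t^2), ht.1, ht.2]
  calc |x*t^2*(1-t^2) / (Real.sqrt ((1-t^2)*(1-x^2*t^2)))^3|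
      = |x*t^2*(1-t^2)| / (Real.sqrt ((1-t^2)*(1-x^2*t^2)))^3 := by
        rw [abs_div, abs_of_pos (pow_pos hs0 3)]
    _ ≤ (1-t^2) / (((1-t^2)*(1-b^2)) * (Real.sqrt (1-t) * Real.sqrt (1-b^2))) :=
        div_le_div₀ ht2.le hnum (by positivity) hs3
    _ = (1/((1-b^2)*Real.sqrt (1-b^2))) * (1/Real.sqrt (1-t)) := by
        field_simp

lemma bound2 {b x t : ℝ} (ht : t ∈ Ioo (0:ℝ) 1) (hx : |x| ≤ b) (hb : b < 1) :
    |t^2*(1-t^2) / (Real.sqrt ((1-t^2)*(1-x^2*t^2)))^3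
      + 3*x^2*t^4*(1-t^2)^2 / (Real.sqrt ((1-t^2)*(1-x^2*t^2)))^5| ≤
      (1/((1-b^2)*Real.sqrt (1-b^2)) + 3/((1-b^2)^2*Real.sqrt (1-b^2))) * (1/Real.sqrt (1-t)) := by
  have hP := Ppos ht hx hb
  have hs0 : 0 < Real.sqrt ((1-t^2)*(1-x^2*t^2)) := Real.sqrt_pos.mpr hP
  have hlow := (sqrtP_lower ht hx hb).1
  have hmid := Pmid ht hx hb
  have ht1 : 0 < 1 - t := by linarith [ht.2]
  have ht2 : 0 < 1 - t^2 := by nlinarith [ht.1, ht.2]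
  have hb2 : 0 < 1 - b^2 := by nlinarith [(abs_nonneg x).trans hx]
  have hx2 : x^2 ≤ b^2 := sq_le_sq' (by linarith [(abs_le.mp hx).1]) (abs_le.mp hx).2
  have hsq : Real.sqrt ((1-t^2)*(1-x^2*t^2)) ^ 2 = (1-t^2)*(1-x^2*t^2) := Real.sq_sqrt hP.le
  have hs3 : ((1-t^2)*(1-b^2)) * (Real.sqrt (1-t) * Real.sqrt (1-b^2)) ≤
      Real.sqrt ((1-t^2)*(1-x^2*t^2)) ^ 3 := by
    have e : Real.sqrt ((1-t^2)*(1-x^2*t^2)) ^ 3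
        = ((1-t^2)*(1-x^2*t^2)) * Real.sqrt ((1-t^2)*(1-x^2*t^2)) := by
      conv_lhs => rw [show (3:ℕ) = 2 + 1 from rfl, pow_succ, hsq]
    rw [e]
    exact mul_le_mul hmid hlow (by positivity) hP.le
  have hs5 : ((1-t^2)*(1-b^2))^2 * (Real.sqrt (1-t) * Real.sqrt (1-b^2)) ≤
      Real.sqrt ((1-t^2)*(1-x^2*t^2)) ^ 5 := by
    have e : Real.sqrt ((1-t^2)*(1-x^2*t^2)) ^ 5
        = ((1-t^2)*(1-x^2*t^2))^2 * Real.sqrt ((1-t^2)*(1-x^2*t^2)) := by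
      conv_lhs => rw [show (5:ℕ) = 2*2 + 1 from rfl, pow_succ, pow_mul, hsq]
    rw [e]
    refine mul_le_mul ?_ hlow (by positivity) (by positivity)
    exact pow_le_pow_left₀ (by positivity) hmid 2
  rw [abs_of_nonneg (by positivity)]
  have h1 : t^2*(1-t^2) / (Real.sqrt ((1-t^2)*(1-x^2*t^2)))^3 ≤
      (1/((1-b^2)*Real.sqrt (1-b^2))) * (1/Real.sqrt (1-t)) := by
    calc t^2*(1-t^2) / (Real.sqrt ((1-t^2)*(1-x^2*t^2)))^3
        ≤ (1-t^2) / (((1-t^2)*(1-b^2)) * (Real.sqrt (1-t) * Real.sqrt (1-b^2))) :=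
          div_le_div₀ ht2.le (by nlinarith [ht.1, ht.2]) (by positivity) hs3
      _ = (1/((1-b^2)*Real.sqrt (1-b^2))) * (1/Real.sqrt (1-t)) := by
          field_simp
  have h2 : 3*x^2*t^4*(1-t^2)^2 / (Real.sqrt ((1-t^2)*(1-x^2*t^2)))^5 ≤
      (3/((1-b^2)^2*Real.sqrt (1-b^2))) * (1/Real.sqrt (1-t)) := by
    calc 3*x^2*t^4*(1-t^2)^2 / (Real.sqrt ((1-t^2)*(1-x^2*t^2)))^5
        ≤ 3*(1-t^2)^2 / (((1-t^2)*(1-b^2))^2 * (Real.sqrt (1-t) * Real.sqrt (1-b^2))) := by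
          refine div_le_div₀ (by positivity) ?_ (by positivity) hs5
          have hb1 : x^2 ≤ 1 := by nlinarith
          have h4 : t^4 ≤ 1 := by nlinarith [ht.1.le, ht.2.le, sq_nonneg t, sq_nonneg (t^2)]
          have h5 : x^2*t^4 ≤ 1 := by nlinarith [sq_nonneg x, sq_nonneg (t^2)]
          nlinarith [h5, sq_nonneg (1-t^2)]
      _ = (3/((1-b^2)^2*Real.sqrt (1-b^2))) * (1/Real.sqrt (1-t)) := by
          field_simp
  calc _ ≤ (1/((1-b^2)*Real.sqrt (1-b^2))) * (1/Real.sqrt (1-t))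
        + (3/((1-b^2)^2*Real.sqrt (1-b^2))) * (1/Real.sqrt (1-t)) := add_le_add h1 h2
    _ = _ := by ring

lemma measK (x : ℝ) : AEStronglyMeasurable
    (fun t => 1 / Real.sqrt ((1 - t^2) * (1 - x^2 * t^2))) (volume.restrict (Set.uIoc (0:ℝ) 1)) :=
  Measurable.aestronglyMeasurable (by fun_prop)

lemma measK1 (x : ℝ) : AEStronglyMeasurable
    (fun t => x * t^2 * (1-t^2) / (Real.sqrt ((1-t^2) * (1-x^2*t^2)))^3)
    (volume.restrict (Set.uIoc (0:ℝ) 1)) :=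
  Measurable.aestronglyMeasurable (by fun_prop)

lemma measK2 (x : ℝ) : AEStronglyMeasurable
    (fun t => t^2*(1-t^2) / (Real.sqrt ((1-t^2) * (1-x^2*t^2)))^3
      + 3*x^2*t^4*(1-t^2)^2 / (Real.sqrt ((1-t^2) * (1-x^2*t^2)))^5)
    (volume.restrict (Set.uIoc (0:ℝ) 1)) :=
  Measurable.aestronglyMeasurable (by fun_prop)

lemma ae_ne_restrict (c : ℝ) (S : Set ℝ) : ∀ᵐ t : ℝ ∂(volume.restrict S), t ≠ c := by
  apply Filter.Eventually.filter_mono (MeasureTheory.ae_mono MeasureTheory.Measure.restrict_le_self)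
  rw [MeasureTheory.ae_iff]
  simpa using measure_singleton c

lemma ballabs {g₀ x : ℝ} (h0 : 0 < g₀) (hx : x ∈ Metric.ball g₀ ((1-g₀)/2)) :
    |x| ≤ (1+g₀)/2 := by
  rw [Metric.mem_ball, Real.dist_eq] at hx
  have := abs_lt.mp hx
  rw [abs_le]
  constructor <;> [linarith [this.1]; linarith [this.2]]

/-- `ellK` has derivative `K1` on `(0,1)`, and the `K1` integrand is integrable. -/
lemma ellK_hasDeriv {g₀ : ℝ} (h0 : 0 < g₀) (h1 : g₀ < 1) :
    IntervalIntegrable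
      (fun t => g₀*t^2*(1-t^2) / (Real.sqrt ((1-t^2) * (1-g₀^2*t^2)))^3) volume 0 1
    ∧ HasDerivAt ellK (K1 g₀) g₀ := by
  have hb1 : (1+g₀)/2 < 1 := by linarith
  have hb2 : 0 < 1 - ((1+g₀)/2)^2 := by nlinarith
  have hg₀b : |g₀| ≤ (1+g₀)/2 := by rw [abs_of_pos h0]; linarith
  have hFint : IntervalIntegrable
      (fun t => 1 / Real.sqrt ((1 - t^2) * (1 - g₀^2 * t^2))) volume 0 1 := by
    apply IntervalIntegrable.mono_fun' (g := fun t =>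
      (1/Real.sqrt (1-((1+g₀)/2)^2)) * (1/Real.sqrt (1-t)))
    · exact ((wInt 0 1).const_mul _)
    · exact measK g₀
    · filter_upwards [ae_ne_restrict 1 _, MeasureTheory.ae_restrict_mem measurableSet_uIoc]
        with t htne htmem
      rw [Set.uIoc_of_le (by norm_num : (0:ℝ) ≤ 1)] at htmem
      exact bound0 ⟨htmem.1, lt_of_le_of_ne htmem.2 htne⟩ hg₀b hb1
  have := hasDerivAt_param 0 1 one_pos
    (fun x t => 1 / Real.sqrt ((1 - t^2) * (1 - x^2 * t^2)))
    (fun x t => x*t^2*(1-t^2) / (Real.sqrt ((1-t^2) * (1-x^2*t^2)))^3)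
    g₀ ((1-g₀)/2) (by linarith)
    (fun t => (1/((1-((1+g₀)/2)^2)*Real.sqrt (1-((1+g₀)/2)^2))) * (1/Real.sqrt (1-t)))
    ((wInt 0 1).const_mul _) (fun x => measK x) (measK1 g₀) hFint
    (fun t ht x hx => bound1 ht (ballabs h0 hx) hb1)
    (fun t ht x hx => hasDerivAt_Kint (Ppos ht (ballabs h0 hx) hb1))
  exact ⟨this.1, this.2⟩

/-- `K1` has derivative `K2` on `(0,1)`, and the `K2` integrand is integrable. -/
lemma K1_hasDeriv {g₀ : ℝ} (h0 : 0 < g₀) (h1 : g₀ < 1) :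
    IntervalIntegrable
      (fun t => t^2*(1-t^2) / (Real.sqrt ((1-t^2) * (1-g₀^2*t^2)))^3
        + 3*g₀^2*t^4*(1-t^2)^2 / (Real.sqrt ((1-t^2) * (1-g₀^2*t^2)))^5) volume 0 1
    ∧ HasDerivAt K1 (K2 g₀) g₀ := by
  have hb1 : (1+g₀)/2 < 1 := by linarith
  have hg₀b : |g₀| ≤ (1+g₀)/2 := by rw [abs_of_pos h0]; linarith
  have := hasDerivAt_param 0 1 one_pos
    (fun x t => x*t^2*(1-t^2) / (Real.sqrt ((1-t^2) * (1-x^2*t^2)))^3)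
    (fun x t => t^2*(1-t^2) / (Real.sqrt ((1-t^2) * (1-x^2*t^2)))^3
      + 3*x^2*t^4*(1-t^2)^2 / (Real.sqrt ((1-t^2) * (1-x^2*t^2)))^5)
    g₀ ((1-g₀)/2) (by linarith)
    (fun t => (1/((1-((1+g₀)/2)^2)*Real.sqrt (1-((1+g₀)/2)^2))
      + 3/((1-((1+g₀)/2)^2)^2*Real.sqrt (1-((1+g₀)/2)^2))) * (1/Real.sqrt (1-t)))
    ((wInt 0 1).const_mul _) (fun x => measK1 x) (measK2 g₀) (ellK_hasDeriv h0 h1).1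
    (fun t ht x hx => bound2 ht (ballabs h0 hx) hb1)
    (fun t ht x hx => hasDerivAt_K1int (Ppos ht (ballabs h0 hx) hb1))
  exact ⟨this.1, this.2⟩

lemma ellK_nonneg (g : ℝ) : 0 ≤ ellK g := by
  apply intervalIntegral.integral_nonneg (by norm_num)
  intro t _
  positivity

lemma K1_nonneg {g : ℝ} (h0 : 0 < g) (h1 : g < 1) : 0 ≤ K1 g := by
  apply intervalIntegral.integral_nonneg (by norm_num)
  intro t ht
  have h2 : 0 ≤ 1 - t^2 := by nlinarith [ht.1, ht.2]
  have h3 : 0 ≤ g*t^2*(1-t^2) := by positivity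
  positivity

lemma K1_le_K2 {g : ℝ} (h0 : 0 < g) (h1 : g < 1) : K1 g ≤ g * K2 g := by
  have hK1i := (ellK_hasDeriv h0 h1).1
  have hK2i := (K1_hasDeriv h0 h1).1
  rw [show g * K2 g = ∫ t in (0:ℝ)..1,
      g * (t^2*(1-t^2) / (Real.sqrt ((1-t^2) * (1-g^2*t^2)))^3
        + 3*g^2*t^4*(1-t^2)^2 / (Real.sqrt ((1-t^2) * (1-g^2*t^2)))^5) from
    (intervalIntegral.integral_const_mul _ _).symm]
  apply intervalIntegral.integral_mono_on (by norm_num) hK1i (hK2i.const_mul g)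
  intro t ht
  have h2 : 0 ≤ 1 - t^2 := by nlinarith [ht.1, ht.2]
  have key : 0 ≤ g * (3*g^2*t^4*(1-t^2)^2 / (Real.sqrt ((1-t^2) * (1-g^2*t^2)))^5) := by
    positivity
  calc g*t^2*(1-t^2) / (Real.sqrt ((1-t^2) * (1-g^2*t^2)))^3
      = g * (t^2*(1-t^2) / (Real.sqrt ((1-t^2) * (1-g^2*t^2)))^3) := by ring
    _ ≤ g * (t^2*(1-t^2) / (Real.sqrt ((1-t^2) * (1-g^2*t^2)))^3)
        + g * (3*g^2*t^4*(1-t^2)^2 / (Real.sqrt ((1-t^2) * (1-g^2*t^2)))^5) :=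
        le_add_of_nonneg_right key
    _ = g * (t^2*(1-t^2) / (Real.sqrt ((1-t^2) * (1-g^2*t^2)))^3
        + 3*g^2*t^4*(1-t^2)^2 / (Real.sqrt ((1-t^2) * (1-g^2*t^2)))^5) := by ring

section Bpart

/-- positivity and lower bounds for the cubic under the square root -/
lemma Qfacts {e1 x f δ1 δ2 : ℝ} (hf : f ∈ Ioo 0 e1) (h1 : δ1 ≤ f - x)
    (h2 : δ2 ≤ f + 6 + e1 + x) (hδ1 : 0 < δ1) (hδ2 : 0 < δ2) :
    0 < -(2/3) * (f - e1) * (f - x) * (f - (-6 - e1 - x)) ∧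
    (2/3)*(e1-f)*(δ1*δ2) ≤ -(2/3) * (f - e1) * (f - x) * (f - (-6 - e1 - x)) := by
  obtain ⟨hf0, hf1⟩ := hf
  have he : -(2/3) * (f - e1) * (f - x) * (f - (-6 - e1 - x))
      = (2/3)*(e1-f)*((f-x)*(f+6+e1+x)) := by ring
  constructor
  · rw [he]
    exact mul_pos (mul_pos (by norm_num) (by linarith))
      (mul_pos (lt_of_lt_of_le hδ1 h1) (lt_of_lt_of_le hδ2 h2))
  · rw [he]
    apply mul_le_mul_of_nonneg_left _ (by linarith)
    exact mul_le_mul h1 h2 hδ2.le (by linarith)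

lemma sqrtQ_lower {e1 x f δ1 δ2 : ℝ} (hf : f ∈ Ioo 0 e1) (h1 : δ1 ≤ f - x)
    (h2 : δ2 ≤ f + 6 + e1 + x) (hδ1 : 0 < δ1) (hδ2 : 0 < δ2) :
    Real.sqrt ((2/3)*(δ1*δ2)) * Real.sqrt (e1 - f)
      ≤ Real.sqrt (-(2/3) * (f - e1) * (f - x) * (f - (-6 - e1 - x))) := by
  rw [← Real.sqrt_mul (by positivity)]
  apply Real.sqrt_le_sqrt
  calc (2/3)*(δ1*δ2) * (e1-f) = (2/3)*(e1-f)*(δ1*δ2) := by ring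
    _ ≤ _ := (Qfacts hf h1 h2 hδ1 hδ2).2

/-- derivative in `x` of the B integrand -/
lemma hasDerivAt_Bint {e1 x f : ℝ}
    (hQ : 0 < -(2/3) * (f - e1) * (f - x) * (f - (-6 - e1 - x))) :
    HasDerivAt (fun y => 1 / Real.sqrt (-(2/3) * (f - e1) * (f - y) * (f - (-6 - e1 - y))))
      ((2/3)*(e1-f)*(6+e1+2*x)
        / (2 * (Real.sqrt (-(2/3) * (f - e1) * (f - x) * (f - (-6 - e1 - x))))^3)) x := by
  have hs0 : 0 < Real.sqrt (-(2/3) * (f - e1) * (f - x) * (f - (-6 - e1 - x))) :=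
    Real.sqrt_pos.mpr hQ
  have hu : HasDerivAt (fun y : ℝ => f - y) (-1) x := by
    simpa using (hasDerivAt_id x).const_sub f
  have hv : HasDerivAt (fun y : ℝ => f - (-6 - e1 - y)) 1 x := by
    have : HasDerivAt (fun y : ℝ => -6 - e1 - y) (-1) x := by
      simpa using (hasDerivAt_id x).const_sub (-6 - e1)
    simpa using this.const_sub f
  have hQ' : HasDerivAt (fun y : ℝ => -(2/3) * (f - e1) * (f - y) * (f - (-6 - e1 - y)))
      ((-(2/3) * (f - e1) * (-1)) * (f - (-6 - e1 - x))
        + (-(2/3) * (f - e1) * (f - x)) * 1) x :=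
    ((hu.const_mul (-(2/3) * (f - e1))).mul hv)
  have hs := hQ'.sqrt hQ.ne'
  have hd := (hasDerivAt_const x (1:ℝ)).div hs hs0.ne'
  refine hd.congr_deriv ?_
  generalize Real.sqrt (-(2/3) * (f - e1) * (f - x) * (f - (-6 - e1 - x))) = s at hs0 ⊢
  field_simp
  ring

/-- derivative in `x` of the B' integrand -/
lemma hasDerivAt_B1int {e1 x f : ℝ}
    (hQ : 0 < -(2/3) * (f - e1) * (f - x) * (f - (-6 - e1 - x))) :
    HasDerivAt (fun y => (2/3)*(e1-f)*(6+e1+2*y)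
        / (2 * (Real.sqrt (-(2/3) * (f - e1) * (f - y) * (f - (-6 - e1 - y))))^3))
      ((2/3)*(e1-f)
        / (Real.sqrt (-(2/3) * (f - e1) * (f - x) * (f - (-6 - e1 - x))))^3
      + (3/4)*((2/3)*(e1-f)*(6+e1+2*x))^2
        / (Real.sqrt (-(2/3) * (f - e1) * (f - x) * (f - (-6 - e1 - x))))^5) x := by
  have hs0 : 0 < Real.sqrt (-(2/3) * (f - e1) * (f - x) * (f - (-6 - e1 - x))) :=
    Real.sqrt_pos.mpr hQ
  have hu : HasDerivAt (fun y : ℝ => f - y) (-1) x := by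
    simpa using (hasDerivAt_id x).const_sub f
  have hv : HasDerivAt (fun y : ℝ => f - (-6 - e1 - y)) 1 x := by
    have : HasDerivAt (fun y : ℝ => -6 - e1 - y) (-1) x := by
      simpa using (hasDerivAt_id x).const_sub (-6 - e1)
    simpa using this.const_sub f
  have hQ' : HasDerivAt (fun y : ℝ => -(2/3) * (f - e1) * (f - y) * (f - (-6 - e1 - y)))
      ((-(2/3) * (f - e1) * (-1)) * (f - (-6 - e1 - x))
        + (-(2/3) * (f - e1) * (f - x)) * 1) x :=
    ((hu.const_mul (-(2/3) * (f - e1))).mul hv)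
  have hs := hQ'.sqrt hQ.ne'
  have hs3 := (hs.pow 3).const_mul (2:ℝ)
  simp only [Pi.pow_apply] at hs3
  have hnum : HasDerivAt (fun y : ℝ => (2/3)*(e1-f)*(6+e1+2*y)) ((2/3)*(e1-f)*2) x := by
    have h6 : HasDerivAt (fun y : ℝ => 6+e1+2*y) 2 x := by
      simpa using ((hasDerivAt_id x).const_mul (2:ℝ)).const_add (6+e1)
    exact h6.const_mul _
  have hd := hnum.div hs3 (mul_pos two_pos (pow_pos hs0 3)).ne'
  refine hd.congr_deriv ?_
  have hsq : Real.sqrt (-(2/3) * (f - e1) * (f - x) * (f - (-6 - e1 - x))) ^ 2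
      = -(2/3) * (f - e1) * (f - x) * (f - (-6 - e1 - x)) := Real.sq_sqrt hQ.le
  generalize Real.sqrt (-(2/3) * (f - e1) * (f - x) * (f - (-6 - e1 - x))) = s at hs0 hsq ⊢
  field_simp
  ring

lemma boundB0 {e1 x f δ1 δ2 : ℝ} (hf : f ∈ Ioo 0 e1) (h1 : δ1 ≤ f - x)
    (h2 : δ2 ≤ f + 6 + e1 + x) (hδ1 : 0 < δ1) (hδ2 : 0 < δ2) :
    |1 / Real.sqrt (-(2/3) * (f - e1) * (f - x) * (f - (-6 - e1 - x)))| ≤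
      (1/Real.sqrt ((2/3)*(δ1*δ2))) * (1/Real.sqrt (e1 - f)) := by
  have hQ := (Qfacts hf h1 h2 hδ1 hδ2).1
  have hσ := sqrtQ_lower hf h1 h2 hδ1 hδ2
  have hef : 0 < e1 - f := by linarith [hf.2]
  have h0 : 0 < Real.sqrt ((2/3)*(δ1*δ2)) * Real.sqrt (e1 - f) := by positivity
  rw [abs_of_pos (by positivity)]
  calc 1 / Real.sqrt (-(2/3) * (f - e1) * (f - x) * (f - (-6 - e1 - x)))
      ≤ 1 / (Real.sqrt ((2/3)*(δ1*δ2)) * Real.sqrt (e1 - f)) :=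
        one_div_le_one_div_of_le h0 hσ
    _ = _ := by rw [one_div_mul_one_div]

lemma boundB1 {e1 x f δ1 δ2 c1 : ℝ} (hf : f ∈ Ioo 0 e1) (h1 : δ1 ≤ f - x)
    (h2 : δ2 ≤ f + 6 + e1 + x) (hδ1 : 0 < δ1) (hδ2 : 0 < δ2)
    (hc : |6+e1+2*x| ≤ c1) :
    |(2/3)*(e1-f)*(6+e1+2*x)
        / (2 * (Real.sqrt (-(2/3) * (f - e1) * (f - x) * (f - (-6 - e1 - x))))^3)| ≤
      (c1/(2*(δ1*δ2)*Real.sqrt ((2/3)*(δ1*δ2)))) * (1/Real.sqrt (e1 - f)) := by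
  have hQ := (Qfacts hf h1 h2 hδ1 hδ2).1
  have hL := (Qfacts hf h1 h2 hδ1 hδ2).2
  have hσ := sqrtQ_lower hf h1 h2 hδ1 hδ2
  have hef : 0 < e1 - f := by linarith [hf.2]
  have hA : 0 < (2/3)*(e1-f) := by linarith
  have hB : 0 < δ1*δ2 := mul_pos hδ1 hδ2
  have hσ1 : 0 < Real.sqrt ((2/3)*(δ1*δ2)) := Real.sqrt_pos.mpr (by positivity)
  have hσ2 : 0 < Real.sqrt (e1-f) := Real.sqrt_pos.mpr hef
  have hcnn : 0 ≤ c1 := (abs_nonneg _).trans hc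
  have hs0 : 0 < Real.sqrt (-(2/3) * (f - e1) * (f - x) * (f - (-6 - e1 - x))) :=
    Real.sqrt_pos.mpr hQ
  have hsq : Real.sqrt (-(2/3) * (f - e1) * (f - x) * (f - (-6 - e1 - x))) ^ 2
      = -(2/3) * (f - e1) * (f - x) * (f - (-6 - e1 - x)) := Real.sq_sqrt hQ.le
  have hden : 0 < 2 * (((2/3)*(e1-f)*(δ1*δ2)) * (Real.sqrt ((2/3)*(δ1*δ2)) * Real.sqrt (e1-f))) :=
    mul_pos two_pos (mul_pos (mul_pos hA hB) (mul_pos hσ1 hσ2))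
  have hs3 : 2 * (((2/3)*(e1-f)*(δ1*δ2)) * (Real.sqrt ((2/3)*(δ1*δ2)) * Real.sqrt (e1-f)))
      ≤ 2 * (Real.sqrt (-(2/3) * (f - e1) * (f - x) * (f - (-6 - e1 - x))))^3 := by
    apply mul_le_mul_of_nonneg_left _ (by norm_num)
    have e : Real.sqrt (-(2/3) * (f - e1) * (f - x) * (f - (-6 - e1 - x))) ^ 3
        = (-(2/3) * (f - e1) * (f - x) * (f - (-6 - e1 - x)))
          * Real.sqrt (-(2/3) * (f - e1) * (f - x) * (f - (-6 - e1 - x))) := by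
      conv_lhs => rw [show (3:ℕ) = 2 + 1 from rfl, pow_succ, hsq]
    rw [e]
    exact mul_le_mul hL hσ (by positivity) hQ.le
  have hnum : |(2/3)*(e1-f)*(6+e1+2*x)| ≤ (2/3)*(e1-f)*c1 := by
    rw [abs_mul, abs_of_nonneg hA.le]
    exact mul_le_mul_of_nonneg_left hc hA.le
  calc |(2/3)*(e1-f)*(6+e1+2*x)
        / (2 * (Real.sqrt (-(2/3) * (f - e1) * (f - x) * (f - (-6 - e1 - x))))^3)|
      = |(2/3)*(e1-f)*(6+e1+2*x)|
        / (2 * (Real.sqrt (-(2/3) * (f - e1) * (f - x) * (f - (-6 - e1 - x))))^3) := by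
        rw [abs_div, abs_of_pos (mul_pos two_pos (pow_pos hs0 3))]
    _ ≤ ((2/3)*(e1-f)*c1)
        / (2 * (((2/3)*(e1-f)*(δ1*δ2)) * (Real.sqrt ((2/3)*(δ1*δ2)) * Real.sqrt (e1-f)))) :=
        div_le_div₀ (mul_nonneg hA.le hcnn) hnum hden hs3
    _ = _ := by
        field_simp

lemma boundB2 {e1 x f δ1 δ2 c1 : ℝ} (hf : f ∈ Ioo 0 e1) (h1 : δ1 ≤ f - x)
    (h2 : δ2 ≤ f + 6 + e1 + x) (hδ1 : 0 < δ1) (hδ2 : 0 < δ2)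
    (hc : |6+e1+2*x| ≤ c1) :
    |(2/3)*(e1-f) / (Real.sqrt (-(2/3) * (f - e1) * (f - x) * (f - (-6 - e1 - x))))^3
      + (3/4)*((2/3)*(e1-f)*(6+e1+2*x))^2
        / (Real.sqrt (-(2/3) * (f - e1) * (f - x) * (f - (-6 - e1 - x))))^5| ≤
      (1/((δ1*δ2)*Real.sqrt ((2/3)*(δ1*δ2)))
        + (3/4)*c1^2/((δ1*δ2)^2*Real.sqrt ((2/3)*(δ1*δ2)))) * (1/Real.sqrt (e1 - f)) := by
  have hQ := (Qfacts hf h1 h2 hδ1 hδ2).1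
  have hL := (Qfacts hf h1 h2 hδ1 hδ2).2
  have hσ := sqrtQ_lower hf h1 h2 hδ1 hδ2
  have hef : 0 < e1 - f := by linarith [hf.2]
  have hA : 0 < (2/3)*(e1-f) := by linarith
  have hB : 0 < δ1*δ2 := mul_pos hδ1 hδ2
  have hσ1 : 0 < Real.sqrt ((2/3)*(δ1*δ2)) := Real.sqrt_pos.mpr (by positivity)
  have hσ2 : 0 < Real.sqrt (e1-f) := Real.sqrt_pos.mpr hef
  have hcnn : 0 ≤ c1 := (abs_nonneg _).trans hc
  have hs0 : 0 < Real.sqrt (-(2/3) * (f - e1) * (f - x) * (f - (-6 - e1 - x))) :=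
    Real.sqrt_pos.mpr hQ
  have hsq : Real.sqrt (-(2/3) * (f - e1) * (f - x) * (f - (-6 - e1 - x))) ^ 2
      = -(2/3) * (f - e1) * (f - x) * (f - (-6 - e1 - x)) := Real.sq_sqrt hQ.le
  have hden3 : 0 < ((2/3)*(e1-f)*(δ1*δ2)) * (Real.sqrt ((2/3)*(δ1*δ2)) * Real.sqrt (e1-f)) :=
    mul_pos (mul_pos hA hB) (mul_pos hσ1 hσ2)
  have hden5 : 0 < ((2/3)*(e1-f)*(δ1*δ2))^2 * (Real.sqrt ((2/3)*(δ1*δ2)) * Real.sqrt (e1-f)) :=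
    mul_pos (pow_pos (mul_pos hA hB) 2) (mul_pos hσ1 hσ2)
  have hs3 : (((2/3)*(e1-f)*(δ1*δ2)) * (Real.sqrt ((2/3)*(δ1*δ2)) * Real.sqrt (e1-f)))
      ≤ (Real.sqrt (-(2/3) * (f - e1) * (f - x) * (f - (-6 - e1 - x))))^3 := by
    have e : Real.sqrt (-(2/3) * (f - e1) * (f - x) * (f - (-6 - e1 - x))) ^ 3
        = (-(2/3) * (f - e1) * (f - x) * (f - (-6 - e1 - x)))
          * Real.sqrt (-(2/3) * (f - e1) * (f - x) * (f - (-6 - e1 - x))) := by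
      conv_lhs => rw [show (3:ℕ) = 2 + 1 from rfl, pow_succ, hsq]
    rw [e]
    exact mul_le_mul hL hσ (by positivity) hQ.le
  have hs5 : (((2/3)*(e1-f)*(δ1*δ2))^2 * (Real.sqrt ((2/3)*(δ1*δ2)) * Real.sqrt (e1-f)))
      ≤ (Real.sqrt (-(2/3) * (f - e1) * (f - x) * (f - (-6 - e1 - x))))^5 := by
    have e : Real.sqrt (-(2/3) * (f - e1) * (f - x) * (f - (-6 - e1 - x))) ^ 5
        = (-(2/3) * (f - e1) * (f - x) * (f - (-6 - e1 - x)))^2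
          * Real.sqrt (-(2/3) * (f - e1) * (f - x) * (f - (-6 - e1 - x))) := by
      rw [show Real.sqrt (-(2/3) * (f - e1) * (f - x) * (f - (-6 - e1 - x))) ^ 5 = (Real.sqrt (-(2/3) * (f - e1) * (f - x) * (f - (-6 - e1 - x))) ^ 2) ^ 2 * Real.sqrt (-(2/3) * (f - e1) * (f - x) * (f - (-6 - e1 - x))) by ring, hsq]
    rw [e]
    refine mul_le_mul ?_ hσ (by positivity) (by positivity)
    exact pow_le_pow_left₀ (mul_pos hA hB).le hL 2
  rw [abs_of_nonneg (add_nonneg (div_nonneg hA.le (by positivity))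
    (div_nonneg (by positivity) (by positivity)))]
  have h1' : (2/3)*(e1-f) / (Real.sqrt (-(2/3) * (f - e1) * (f - x) * (f - (-6 - e1 - x))))^3
      ≤ (1/((δ1*δ2)*Real.sqrt ((2/3)*(δ1*δ2)))) * (1/Real.sqrt (e1 - f)) := by
    calc (2/3)*(e1-f) / (Real.sqrt (-(2/3) * (f - e1) * (f - x) * (f - (-6 - e1 - x))))^3
        ≤ ((2/3)*(e1-f))
          / (((2/3)*(e1-f)*(δ1*δ2)) * (Real.sqrt ((2/3)*(δ1*δ2)) * Real.sqrt (e1-f))) :=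
          div_le_div₀ hA.le le_rfl hden3 hs3
      _ = _ := by field_simp
  have h2' : (3/4)*((2/3)*(e1-f)*(6+e1+2*x))^2
        / (Real.sqrt (-(2/3) * (f - e1) * (f - x) * (f - (-6 - e1 - x))))^5
      ≤ ((3/4)*c1^2/((δ1*δ2)^2*Real.sqrt ((2/3)*(δ1*δ2)))) * (1/Real.sqrt (e1 - f)) := by
    have hnum2 : (3/4)*((2/3)*(e1-f)*(6+e1+2*x))^2 ≤ (3/4)*((2/3)*(e1-f))^2*c1^2 := by
      have e : ((2/3)*(e1-f)*(6+e1+2*x))^2 = ((2/3)*(e1-f))^2*(6+e1+2*x)^2 := by ring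
      rw [e]
      have h6 : (6+e1+2*x)^2 ≤ c1^2 := by
        rw [← sq_abs]
        exact pow_le_pow_left₀ (abs_nonneg _) hc 2
      nlinarith [sq_nonneg ((2/3)*(e1-f))]
    calc (3/4)*((2/3)*(e1-f)*(6+e1+2*x))^2
          / (Real.sqrt (-(2/3) * (f - e1) * (f - x) * (f - (-6 - e1 - x))))^5
        ≤ ((3/4)*((2/3)*(e1-f))^2*c1^2)
          / (((2/3)*(e1-f)*(δ1*δ2))^2 * (Real.sqrt ((2/3)*(δ1*δ2)) * Real.sqrt (e1-f))) :=
          div_le_div₀ (by positivity) hnum2 hden5 hs5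
      _ = _ := by field_simp
  calc _ ≤ (1/((δ1*δ2)*Real.sqrt ((2/3)*(δ1*δ2)))) * (1/Real.sqrt (e1 - f))
        + ((3/4)*c1^2/((δ1*δ2)^2*Real.sqrt ((2/3)*(δ1*δ2)))) * (1/Real.sqrt (e1 - f)) :=
        add_le_add h1' h2'
    _ = _ := by ring

lemma measB (e1 x : ℝ) : AEStronglyMeasurable
    (fun f => 1 / Real.sqrt (-(2/3) * (f - e1) * (f - x) * (f - (-6 - e1 - x))))
    (volume.restrict (Set.uIoc (0:ℝ) e1)) :=
  Measurable.aestronglyMeasurable (by fun_prop)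

lemma measB1 (e1 x : ℝ) : AEStronglyMeasurable
    (fun f => (2/3)*(e1-f)*(6+e1+2*x)
      / (2 * (Real.sqrt (-(2/3) * (f - e1) * (f - x) * (f - (-6 - e1 - x))))^3))
    (volume.restrict (Set.uIoc (0:ℝ) e1)) :=
  Measurable.aestronglyMeasurable (by fun_prop)

lemma measB2 (e1 x : ℝ) : AEStronglyMeasurable
    (fun f => (2/3)*(e1-f) / (Real.sqrt (-(2/3) * (f - e1) * (f - x) * (f - (-6 - e1 - x))))^3
      + (3/4)*((2/3)*(e1-f)*(6+e1+2*x))^2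
        / (Real.sqrt (-(2/3) * (f - e1) * (f - x) * (f - (-6 - e1 - x))))^5)
    (volume.restrict (Set.uIoc (0:ℝ) e1)) :=
  Measurable.aestronglyMeasurable (by fun_prop)

/-- facts about points in the ball around `x₀` -/
lemma ballB {e1 x₀ x f : ℝ} (he1 : 0 < e1) (hx₀ : x₀ ∈ Ioo (-3-e1/2) 0)
    (hx : x ∈ Metric.ball x₀ (-x₀/2)) (hf : f ∈ Ioo 0 e1) :
    -x₀/2 ≤ f - x ∧ (3/2 : ℝ) ≤ f + 6 + e1 + x ∧ |6+e1+2*x| ≤ 6+e1-3*x₀ := by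
  obtain ⟨hx₀1, hx₀2⟩ := hx₀
  rw [Metric.mem_ball, Real.dist_eq] at hx
  have h := abs_lt.mp hx
  refine ⟨by linarith [hf.1], by linarith [hf.1], ?_⟩
  rw [abs_le]
  constructor <;> linarith

lemma Bint_integrable {e1 x₀ : ℝ} (he1 : 0 < e1) (hx₀ : x₀ ∈ Ioo (-3-e1/2) 0) :
    IntervalIntegrable
      (fun f => 1 / Real.sqrt (-(2/3) * (f - e1) * (f - x₀) * (f - (-6 - e1 - x₀)))) volume 0 e1 := by
  apply IntervalIntegrable.mono_fun' (g := fun f =>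
    (1/Real.sqrt ((2/3)*((-x₀/2)*(3/2)))) * (1/Real.sqrt (e1 - f)))
  · exact ((wInt 0 e1).const_mul _)
  · exact measB e1 x₀
  · filter_upwards [ae_ne_restrict e1 _, MeasureTheory.ae_restrict_mem measurableSet_uIoc]
      with f hfne hfmem
    rw [Set.uIoc_of_le he1.le] at hfmem
    have hf : f ∈ Ioo 0 e1 := ⟨hfmem.1, lt_of_le_of_ne hfmem.2 hfne⟩
    have hx : x₀ ∈ Metric.ball x₀ (-x₀/2) := by
      rw [Metric.mem_ball, Real.dist_eq]
      simp only [sub_self, abs_zero]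
      linarith [hx₀.2]
    obtain ⟨b1, b2, _⟩ := ballB he1 hx₀ hx hf
    exact boundB0 hf b1 b2 (by linarith [hx₀.2]) (by norm_num)

lemma B_hasDeriv {e1 x₀ : ℝ} (he1 : 0 < e1) (hx₀ : x₀ ∈ Ioo (-3-e1/2) 0) :
    IntervalIntegrable
      (fun f => (2/3)*(e1-f)*(6+e1+2*x₀)
        / (2 * (Real.sqrt (-(2/3) * (f - e1) * (f - x₀) * (f - (-6 - e1 - x₀))))^3)) volume 0 e1
    ∧ HasDerivAt
      (fun x => ∫ f in (0:ℝ)..e1, 1 / Real.sqrt (-(2/3) * (f - e1) * (f - x) * (f - (-6 - e1 - x))))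
      (∫ f in (0:ℝ)..e1, (2/3)*(e1-f)*(6+e1+2*x₀)
        / (2 * (Real.sqrt (-(2/3) * (f - e1) * (f - x₀) * (f - (-6 - e1 - x₀))))^3)) x₀ := by
  have hε : 0 < -x₀/2 := by linarith [hx₀.2]
  exact hasDerivAt_param 0 e1 he1
    (fun x f => 1 / Real.sqrt (-(2/3) * (f - e1) * (f - x) * (f - (-6 - e1 - x))))
    (fun x f => (2/3)*(e1-f)*(6+e1+2*x)
      / (2 * (Real.sqrt (-(2/3) * (f - e1) * (f - x) * (f - (-6 - e1 - x))))^3))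
    x₀ (-x₀/2) hε
    (fun f => ((6+e1-3*x₀)/(2*((-x₀/2)*(3/2))*Real.sqrt ((2/3)*((-x₀/2)*(3/2)))))
      * (1/Real.sqrt (e1 - f)))
    ((wInt 0 e1).const_mul _) (fun x => measB e1 x) (measB1 e1 x₀)
    (Bint_integrable he1 hx₀)
    (fun f hf x hx => by
      obtain ⟨b1, b2, b3⟩ := ballB he1 hx₀ hx hf
      exact boundB1 hf b1 b2 hε (by norm_num) b3)
    (fun f hf x hx => by
      obtain ⟨b1, b2, _⟩ := ballB he1 hx₀ hx hf
      exact hasDerivAt_Bint (Qfacts hf b1 b2 hε (by norm_num)).1)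

lemma B1_hasDeriv {e1 x₀ : ℝ} (he1 : 0 < e1) (hx₀ : x₀ ∈ Ioo (-3-e1/2) 0) :
    IntervalIntegrable
      (fun f => (2/3)*(e1-f) / (Real.sqrt (-(2/3) * (f - e1) * (f - x₀) * (f - (-6 - e1 - x₀))))^3
        + (3/4)*((2/3)*(e1-f)*(6+e1+2*x₀))^2
          / (Real.sqrt (-(2/3) * (f - e1) * (f - x₀) * (f - (-6 - e1 - x₀))))^5) volume 0 e1
    ∧ HasDerivAt
      (fun x => ∫ f in (0:ℝ)..e1, (2/3)*(e1-f)*(6+e1+2*x)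
        / (2 * (Real.sqrt (-(2/3) * (f - e1) * (f - x) * (f - (-6 - e1 - x))))^3))
      (∫ f in (0:ℝ)..e1,
        ((2/3)*(e1-f) / (Real.sqrt (-(2/3) * (f - e1) * (f - x₀) * (f - (-6 - e1 - x₀))))^3
        + (3/4)*((2/3)*(e1-f)*(6+e1+2*x₀))^2
          / (Real.sqrt (-(2/3) * (f - e1) * (f - x₀) * (f - (-6 - e1 - x₀))))^5)) x₀ := by
  have hε : 0 < -x₀/2 := by linarith [hx₀.2]
  exact hasDerivAt_param 0 e1 he1
    (fun x f => (2/3)*(e1-f)*(6+e1+2*x)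
      / (2 * (Real.sqrt (-(2/3) * (f - e1) * (f - x) * (f - (-6 - e1 - x))))^3))
    (fun x f => (2/3)*(e1-f) / (Real.sqrt (-(2/3) * (f - e1) * (f - x) * (f - (-6 - e1 - x))))^3
      + (3/4)*((2/3)*(e1-f)*(6+e1+2*x))^2
        / (Real.sqrt (-(2/3) * (f - e1) * (f - x) * (f - (-6 - e1 - x))))^5)
    x₀ (-x₀/2) hε
    (fun f => (1/(((-x₀/2)*(3/2))*Real.sqrt ((2/3)*((-x₀/2)*(3/2))))
      + (3/4)*(6+e1-3*x₀)^2/(((-x₀/2)*(3/2))^2*Real.sqrt ((2/3)*((-x₀/2)*(3/2)))))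
      * (1/Real.sqrt (e1 - f)))
    ((wInt 0 e1).const_mul _) (fun x => measB1 e1 x) (measB2 e1 x₀)
    (B_hasDeriv he1 hx₀).1
    (fun f hf x hx => by
      obtain ⟨b1, b2, b3⟩ := ballB he1 hx₀ hx hf
      exact boundB2 hf b1 b2 hε (by norm_num) b3)
    (fun f hf x hx => by
      obtain ⟨b1, b2, _⟩ := ballB he1 hx₀ hx hf
      exact hasDerivAt_B1int (Qfacts hf b1 b2 hε (by norm_num)).1)

end Bpart

section Apart

lemma gfun_hasDeriv {e1 x : ℝ} (he1 : 0 < e1) (hx : x ∈ Ioo (-3-e1/2) 0) :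
    HasDerivAt (fun y => Real.sqrt ((e1-y)/(6+2*e1+y)))
      (-(6+3*e1) / (2*Real.sqrt (e1-x)*((6+2*e1+x)*Real.sqrt (6+2*e1+x)))) x := by
  have hM : 0 < e1 - x := by linarith [hx.2]
  have hS : 0 < 6+2*e1+x := by linarith [hx.1]
  have hr : 0 < (e1-x)/(6+2*e1+x) := div_pos hM hS
  have hm : HasDerivAt (fun y : ℝ => e1 - y) (-1) x := by
    simpa using (hasDerivAt_id x).const_sub e1
  have hs : HasDerivAt (fun y : ℝ => 6+2*e1+y) 1 x := by
    simpa using (hasDerivAt_id x).const_add (6+2*e1)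
  have hdiv := hm.div hs hS.ne'
  have hsqrt := hdiv.sqrt hr.ne'
  simp only [Pi.div_apply] at hsqrt
  convert hsqrt using 1
  rw [Real.sqrt_div hM.le]
  have hu0 : 0 < Real.sqrt (e1-x) := Real.sqrt_pos.mpr hM
  have hv0 : 0 < Real.sqrt (6+2*e1+x) := Real.sqrt_pos.mpr hS
  have hv2 : Real.sqrt (6+2*e1+x)^2 = 6+2*e1+x := Real.sq_sqrt hS.le
  rw [show (6+3*e1 : ℝ) = (e1-x) + (6+2*e1+x) by ring]
  generalize Real.sqrt (e1-x) = u at hu0 ⊢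
  generalize Real.sqrt (6+2*e1+x) = v at hv0 hv2 ⊢
  rw [← hv2]
  field_simp
  ring

lemma gfun_mem {e1 x : ℝ} (he1 : 0 < e1) (hx : x ∈ Ioo (-3-e1/2) 0) :
    0 < Real.sqrt ((e1-x)/(6+2*e1+x)) ∧ Real.sqrt ((e1-x)/(6+2*e1+x)) < 1 := by
  have hM : 0 < e1 - x := by linarith [hx.2]
  have hS : 0 < 6+2*e1+x := by linarith [hx.1]
  have hr : 0 < (e1-x)/(6+2*e1+x) := div_pos hM hS
  refine ⟨Real.sqrt_pos.mpr hr, ?_⟩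
  have h1 : (e1-x)/(6+2*e1+x) < 1 := (div_lt_one hS).mpr (by linarith [hx.1])
  have := Real.sqrt_lt_sqrt hr.le h1
  rwa [Real.sqrt_one] at this

/-- first derivative of the A-term -/
lemma A_hasDeriv1 {e1 x : ℝ} (he1 : 0 < e1) (hx : x ∈ Ioo (-3-e1/2) 0) :
    HasDerivAt (fun y => Real.sqrt 6 * ellK (Real.sqrt ((e1 - y) / (6 + 2*e1 + y)))
        / Real.sqrt (6 + 2*e1 + y))
      (Real.sqrt 6 * (-((6+3*e1) * K1 (Real.sqrt ((e1-x)/(6+2*e1+x))))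
          / (2*Real.sqrt (e1-x)*(6+2*e1+x)^2)
        - ellK (Real.sqrt ((e1-x)/(6+2*e1+x))) / (2*Real.sqrt (6+2*e1+x)^3))) x := by
  have hM : 0 < e1 - x := by linarith [hx.2]
  have hS : 0 < 6+2*e1+x := by linarith [hx.1]
  obtain ⟨hg0, hg1⟩ := gfun_mem he1 hx
  have hgd := gfun_hasDeriv he1 hx
  have hellKg := (ellK_hasDeriv hg0 hg1).2.comp x hgd
  simp only [Function.comp_def] at hellKg
  have hs : HasDerivAt (fun y : ℝ => 6+2*e1+y) 1 x := by
    simpa using (hasDerivAt_id x).const_add (6+2*e1)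
  have hv0 : 0 < Real.sqrt (6+2*e1+x) := Real.sqrt_pos.mpr hS
  have hden := hs.sqrt hS.ne'
  have hA := (hellKg.const_mul (Real.sqrt 6)).div hden hv0.ne'
  refine hA.congr_deriv ?_
  have hu0 : 0 < Real.sqrt (e1-x) := Real.sqrt_pos.mpr hM
  have hv2 : Real.sqrt (6+2*e1+x)^2 = 6+2*e1+x := Real.sq_sqrt hS.le
  rw [show (6+3*e1 : ℝ) = (e1-x) + (6+2*e1+x) by ring]
  generalize Real.sqrt (e1-x) = u at hu0 ⊢
  generalize Real.sqrt (6+2*e1+x) = v at hv0 hv2 ⊢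
  rw [← hv2]
  field_simp

/-- second derivative of the A-term is nonnegative -/
lemma A_hasDeriv2 {e1 x : ℝ} (he1 : 0 < e1) (hx : x ∈ Ioo (-3-e1/2) 0) :
    ∃ d : ℝ, 0 ≤ d ∧ HasDerivAt (fun y =>
      Real.sqrt 6 * (-((6+3*e1) * K1 (Real.sqrt ((e1-y)/(6+2*e1+y))))
          / (2*Real.sqrt (e1-y)*(6+2*e1+y)^2)
        - ellK (Real.sqrt ((e1-y)/(6+2*e1+y))) / (2*Real.sqrt (6+2*e1+y)^3))) d x := by
  have hM : 0 < e1 - x := by linarith [hx.2]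
  have hS : 0 < 6+2*e1+x := by linarith [hx.1]
  obtain ⟨hg0, hg1⟩ := gfun_mem he1 hx
  have hgd := gfun_hasDeriv he1 hx
  have hellKg := (ellK_hasDeriv hg0 hg1).2.comp x hgd
  simp only [Function.comp_def] at hellKg
  have hK1g := (K1_hasDeriv hg0 hg1).2.comp x hgd
  simp only [Function.comp_def] at hK1g
  have hm : HasDerivAt (fun y : ℝ => e1 - y) (-1) x := by
    simpa using (hasDerivAt_id x).const_sub e1
  have hs : HasDerivAt (fun y : ℝ => 6+2*e1+y) 1 x := by
    simpa using (hasDerivAt_id x).const_add (6+2*e1)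
  have hu0 : 0 < Real.sqrt (e1-x) := Real.sqrt_pos.mpr hM
  have hv0 : 0 < Real.sqrt (6+2*e1+x) := Real.sqrt_pos.mpr hS
  have hT1num := (hK1g.const_mul (6+3*e1)).neg
  have hT1den := ((hm.sqrt hM.ne').const_mul 2).mul (hs.pow 2)
  simp only [Pi.pow_apply] at hT1den
  have hT1denne : 2*Real.sqrt (e1-x)*(6+2*e1+x)^2 ≠ 0 := by positivity
  have hT1 := hT1num.div hT1den hT1denne
  simp only [Pi.mul_apply, Pi.pow_apply, Pi.neg_apply] at hT1
  have hT2den := ((hs.sqrt hS.ne').pow 3).const_mul 2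
  simp only [Pi.pow_apply] at hT2den
  have hT2denne : 2*Real.sqrt (6+2*e1+x)^3 ≠ 0 := by positivity
  have hT2 := hellKg.div hT2den hT2denne
  have hA2 := (hT1.sub hT2).const_mul (Real.sqrt 6)
  refine ⟨_, ?_, hA2⟩
  -- nonnegativity of the derivative value
  have hk0 : 0 ≤ ellK (Real.sqrt ((e1-x)/(6+2*e1+x))) := ellK_nonneg _
  have hk1 : 0 ≤ K1 (Real.sqrt ((e1-x)/(6+2*e1+x))) := K1_nonneg hg0 hg1
  have h := K1_le_K2 hg0 hg1
  have hsix : (0:ℝ) ≤ Real.sqrt 6 := Real.sqrt_nonneg 6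
  have hu2 : Real.sqrt (e1-x)^2 = e1-x := Real.sq_sqrt hM.le
  have hv2 : Real.sqrt (6+2*e1+x)^2 = 6+2*e1+x := Real.sq_sqrt hS.le
  set k0 := ellK (Real.sqrt ((e1-x)/(6+2*e1+x))) with hk0def
  set k1 := K1 (Real.sqrt ((e1-x)/(6+2*e1+x))) with hk1def
  set k2 := K2 (Real.sqrt ((e1-x)/(6+2*e1+x))) with hk2def
  rw [Real.sqrt_div hM.le] at h
  rw [show (6+3*e1 : ℝ) = (e1-x) + (6+2*e1+x) by ring]
  generalize Real.sqrt (e1-x) = u at hu0 hu2 h ⊢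
  generalize Real.sqrt (6+2*e1+x) = v at hv0 hv2 h ⊢
  rw [← hu2, ← hv2]
  have hk12 : k1 * v ≤ k2 * u := by
    have h3 := mul_le_mul_of_nonneg_right h hv0.le
    have e : u / v * k2 * v = k2 * u := by field_simp
    rw [e] at h3
    exact h3
  have hnice : (0:ℝ) ≤ Real.sqrt 6 * ((3/4)*k0/v^5
      + (k2*u - k1*v)*(v^2+u^2)^2/(4*u^3*v^7)
      + k1*((v^2+u^2)*(6*u^2))/(4*u^3*v^6)) := by
    have t1 : (0:ℝ) ≤ (3/4)*k0/v^5 := by positivity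
    have t2 : (0:ℝ) ≤ (k2*u - k1*v)*(v^2+u^2)^2/(4*u^3*v^7) := by
      apply div_nonneg _ (by positivity)
      exact mul_nonneg (by linarith) (by positivity)
    have t3 : (0:ℝ) ≤ k1*((v^2+u^2)*(6*u^2))/(4*u^3*v^6) := by positivity
    exact mul_nonneg hsix (by linarith)
  convert hnice using 1
  field_simp
  ring

end Apart

/-- `I_{2,1}(e1, ·)` is strictly convex in `e2`: its second derivative in `e2`
is positive on `(-3 - e1/2, 0)`. -/
theorem I21_second_deriv_pos (e1 : ℝ) (he1 : 0 < e1) (e2 : ℝ)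
    (he2 : e2 ∈ Set.Ioo (-3 - e1/2) 0) :
    0 < deriv (deriv (fun e2 : ℝ =>
      Real.sqrt 6 * ellK (Real.sqrt ((e1 - e2) / (6 + 2*e1 + e2))) /
        Real.sqrt (6 + 2*e1 + e2) +
      ∫ f in (0:ℝ)..e1,
        1 / Real.sqrt (-(2/3) * (f - e1) * (f - e2) * (f - (-6 - e1 - e2))))) e2 := by
  have he2' : e2 ∈ Ioo (-3 - e1/2) 0 := he2
  have hD : Ioo (-3 - e1/2) 0 ∈ nhds e2 := isOpen_Ioo.mem_nhds he2'
  have hd1 : deriv (fun y : ℝ =>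
      Real.sqrt 6 * ellK (Real.sqrt ((e1 - y) / (6 + 2*e1 + y))) /
        Real.sqrt (6 + 2*e1 + y) +
      ∫ f in (0:ℝ)..e1,
        1 / Real.sqrt (-(2/3) * (f - e1) * (f - y) * (f - (-6 - e1 - y))))
      =ᶠ[nhds e2] (fun x : ℝ =>
        Real.sqrt 6 * (-((6+3*e1) * K1 (Real.sqrt ((e1-x)/(6+2*e1+x))))
            / (2*Real.sqrt (e1-x)*(6+2*e1+x)^2)
          - ellK (Real.sqrt ((e1-x)/(6+2*e1+x))) / (2*Real.sqrt (6+2*e1+x)^3))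
        + ∫ f in (0:ℝ)..e1, (2/3)*(e1-f)*(6+e1+2*x)
            / (2 * (Real.sqrt (-(2/3) * (f - e1) * (f - x) * (f - (-6 - e1 - x))))^3)) := by
    filter_upwards [hD] with x hx
    exact ((A_hasDeriv1 he1 hx).add (B_hasDeriv he1 hx).2).deriv
  rw [hd1.deriv_eq]
  obtain ⟨dA, hdA0, hdA⟩ := A_hasDeriv2 he1 he2'
  have hB2 := B1_hasDeriv he1 he2'
  have hF2 := hdA.add hB2.2
  erw [hF2.deriv]
  have hpos : 0 < ∫ f in (0:ℝ)..e1,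
      ((2/3)*(e1-f) / (Real.sqrt (-(2/3) * (f - e1) * (f - e2) * (f - (-6 - e1 - e2))))^3
        + (3/4)*((2/3)*(e1-f)*(6+e1+2*e2))^2
          / (Real.sqrt (-(2/3) * (f - e1) * (f - e2) * (f - (-6 - e1 - e2))))^5) := by
    apply intervalIntegral_pos_of_pos_on hB2.1 _ he1
    intro f hf
    have hxball : e2 ∈ Metric.ball e2 (-e2/2) := by
      rw [Metric.mem_ball, Real.dist_eq]
      simp only [sub_self, abs_zero]
      linarith [he2'.2]
    obtain ⟨b1, b2, _⟩ := ballB he1 he2' hxball hf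
    have hQ := (Qfacts hf b1 b2 (by linarith [he2'.2]) (by norm_num)).1
    have hs0 : 0 < Real.sqrt (-(2/3) * (f - e1) * (f - e2) * (f - (-6 - e1 - e2))) :=
      Real.sqrt_pos.mpr hQ
    apply add_pos_of_pos_of_nonneg
    · exact div_pos (by linarith [hf.2]) (pow_pos hs0 3)
    · positivity
  linarith
end
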